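/- arXiv:1710.08621 — 6 statements merged into one kernel-verified Lean document; each statement's English description precedes it below -/
import Mathlib

section
/- Let S be a linear binary subdivision scheme with finitely supported mask (a_ℓ), defined by (Sx)_i = Σ_j a_{i-2j} x_j for real-valued sequences x. If S is convergent, i.e., for every bounded input sequence x the piecewise linear functions interpolating S^k x at the parameters i/2^k converge uniformly on compact sets to a continuous nonzero limit for some input, then Σ_j a_{i-2j} = 1 for all i (affine invariance). -/
/-- Convergence of a linear binary subdivision scheme implies
affine invariance of its mask: `∑ j, a (i - 2*j) = 1` for all `i`. -/
theorem stmt_0 (a : ℤ → ℝ) (ha : (Function.support a).Finite)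
    (S : (ℤ → ℝ) → (ℤ → ℝ))
    (hS : ∀ (x : ℤ → ℝ) (i : ℤ), S x i = ∑ᶠ j : ℤ, a (i - 2*j) * x j)
    (hconv : ∀ x : ℤ → ℝ, (∃ B, ∀ i, |x i| ≤ B) →
      ∃ f : ℝ → ℝ, Continuous f ∧
        ∀ ε > 0, ∃ K, ∀ k ≥ K, ∀ i : ℤ, |S^[k] x i - f ((i : ℝ) / 2 ^ k)| ≤ ε)
    (hnonzero : ∃ x : ℤ → ℝ, (∃ B, ∀ i, |x i| ≤ B) ∧
      ∃ f : ℝ → ℝ, Continuous f ∧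
        (∀ ε > 0, ∃ K, ∀ k ≥ K, ∀ i : ℤ, |S^[k] x i - f ((i : ℝ) / 2 ^ k)| ≤ ε) ∧
        f ≠ 0) :
    ∀ i : ℤ, ∑ᶠ j : ℤ, a (i - 2*j) = 1 := by
  classical
  set T : Finset ℤ := ha.toFinset with hT
  set J : ℤ → Finset ℤ := fun i => T.image (fun ℓ => (i - ℓ) / 2) with hJ
  -- support lemma
  have hsupp : ∀ (i : ℤ), Function.support (fun j : ℤ => a (i - 2*j)) ⊆ (J i : Set ℤ) := by
    intro i j hj
    simp only [Function.mem_support] at hj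
    simp only [hJ, Finset.coe_image, Set.mem_image, Finset.mem_coe]
    refine ⟨i - 2*j, ?_, by omega⟩
    simpa [hT] using hj
  have hsupp' : ∀ (i : ℤ) (y : ℤ → ℝ),
      Function.support (fun j : ℤ => a (i - 2*j) * y j) ⊆ (J i : Set ℤ) := by
    intro i y j hj
    apply hsupp i
    simp only [Function.mem_support] at hj ⊢
    intro h; exact hj (by simp [h])
  have hsum : ∀ (i : ℤ) (y : ℤ → ℝ),
      ∑ᶠ j : ℤ, a (i - 2*j) * y j = ∑ j ∈ J i, a (i - 2*j) * y j := fun i y =>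
    finsum_eq_finset_sum_of_support_subset _ (hsupp' i y)
  have hsig : ∀ i : ℤ, ∑ᶠ j : ℤ, a (i - 2*j) = ∑ j ∈ J i, a (i - 2*j) := fun i =>
    finsum_eq_finset_sum_of_support_subset _ (hsupp i)
  set σ : ℤ → ℝ := fun i => ∑ᶠ j : ℤ, a (i - 2*j) with hσ
  -- periodicity: σ (i + 2*n) = σ i
  have hper : ∀ i n : ℤ, σ (i + 2*n) = σ i := by
    intro i n
    have h1 : (fun j : ℤ => a (i + 2*n - 2*j))
        = fun j : ℤ => (fun j' : ℤ => a (i - 2*j')) ((Equiv.subRight n) j) := by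
      funext j; simp only [Equiv.subRight_apply]; congr 1; ring
    show ∑ᶠ j : ℤ, a (i + 2*n - 2*j) = ∑ᶠ j : ℤ, a (i - 2*j)
    rw [h1]
    exact finsum_comp_equiv (Equiv.subRight n) (f := fun j' : ℤ => a (i - 2*j'))
  -- bound on mask support and ℓ¹ norm
  set A : ℝ := ∑ ℓ ∈ T, |a ℓ| with hA
  have hA0 : 0 ≤ A := Finset.sum_nonneg fun _ _ => abs_nonneg _
  obtain ⟨N, hN0, hN⟩ : ∃ N : ℤ, 0 ≤ N ∧ ∀ ℓ ∈ T, |ℓ| ≤ N := by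
    obtain ⟨M, hM⟩ : ∃ M : ℤ, ∀ ℓ ∈ T, |ℓ| ≤ M := by
      rcases T.eq_empty_or_nonempty with h | h
      · exact ⟨0, by simp [h]⟩
      · obtain ⟨M, hM⟩ := (T.image (fun ℓ => |ℓ|)).max_of_nonempty (h.image _)
        exact ⟨M, fun ℓ hℓ => Finset.le_max_of_eq (Finset.mem_image_of_mem _ hℓ) hM⟩
    exact ⟨max M 0, le_max_right _ _, fun ℓ hℓ => le_trans (hM ℓ hℓ) (le_max_left _ _)⟩
  -- sum of |a| over J i bounded by A
  have hAi : ∀ i : ℤ, ∑ j ∈ J i, |a (i - 2*j)| ≤ A := by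
    intro i
    have hinj : Set.InjOn (fun j : ℤ => i - 2*j) (J i : Set ℤ) := by
      intro x _ y _ h; simp only at h; omega
    rw [← Finset.sum_image (f := fun ℓ => |a ℓ|) (fun x hx y hy h => hinj hx hy h)]
    have hsub : ∀ ℓ ∈ (J i).image (fun j => i - 2*j), |a ℓ| ≠ 0 → ℓ ∈ T := by
      intro ℓ _ hne
      simp only [hT, Set.Finite.mem_toFinset, Function.mem_support]
      intro h; exact hne (by simp [h])
    calc ∑ ℓ ∈ (J i).image (fun j => i - 2*j), |a ℓ|
        = ∑ ℓ ∈ ((J i).image (fun j => i - 2*j)).filter (fun ℓ => ℓ ∈ T), |a ℓ| := by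
          rw [Finset.sum_filter_of_ne]
          intro ℓ hℓ hne; exact hsub ℓ hℓ hne
      _ ≤ A := by
          apply Finset.sum_le_sum_of_subset_of_nonneg
          · intro ℓ hℓ; exact (Finset.mem_filter.mp hℓ).2
          · intro ℓ _ _; exact abs_nonneg _
  -- the analytic argument
  obtain ⟨x, hxB, f, hfc, hfa, hfne⟩ := hnonzero
  obtain ⟨t, hft⟩ : ∃ t, f t ≠ 0 := by
    by_contra h
    push_neg at h
    exact hfne (funext fun s => h s)
  intro i
  suffices hσ1 : σ i * f t = f t by
    have : (σ i - 1) * f t = 0 := by ring_nf; linarith [hσ1]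
    rcases mul_eq_zero.mp this with h | h
    · have : σ i = 1 := by linarith
      simpa [hσ] using this
    · exact absurd h hft
  -- show |σ i * f t - f t| ≤ ε for all ε > 0
  have key : ∀ ε > (0:ℝ), |σ i * f t - f t| ≤ ε := by
    intro ε hε
    set ε1 : ℝ := ε / (2*A + 3) with hε1
    have hden : (0:ℝ) < 2*A + 3 := by linarith
    have hε1pos : 0 < ε1 := div_pos hε hden
    -- continuity at t
    obtain ⟨δ, hδpos, hδ⟩ : ∃ δ > 0, ∀ s : ℝ, |s - t| ≤ δ → |f s - f t| ≤ ε1 := by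
      have := Metric.continuous_iff.mp hfc t ε1 hε1pos
      obtain ⟨δ, hδpos, hδ⟩ := this
      refine ⟨δ/2, by linarith, fun s hs => ?_⟩
      have : dist s t < δ := by
        rw [Real.dist_eq]; linarith
      exact le_of_lt (by simpa [Real.dist_eq] using hδ s this)
    obtain ⟨K1, hK1⟩ := hfa ε1 hε1pos
    -- choose K2 with 2^K2 > (N + |i| + 1)/δ
    obtain ⟨K2, hK2⟩ := pow_unbounded_of_one_lt (((N:ℝ) + |(i:ℝ)| + 1)/δ) (by norm_num : (1:ℝ) < 2)
    set k : ℕ := max K1 K2 with hk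
    have h2k : ((N:ℝ) + |(i:ℝ)| + 1)/δ < 2^k := lt_of_lt_of_le hK2 (by
      apply pow_le_pow_right₀ (by norm_num) (le_max_right _ _))
    have h2kpos : (0:ℝ) < 2^k := by positivity
    have hclose : ((N:ℝ) + |(i:ℝ)| + 1) / 2^k ≤ δ := by
      rw [div_le_iff₀ h2kpos]
      rw [div_lt_iff₀ hδpos] at h2k
      nlinarith
    -- the index
    set n : ℤ := ⌊t * 2^k⌋ with hn
    set m : ℤ := i + 2*n with hm
    have hσm : σ m = σ i := hper i n
    have hfloor1 : (n:ℝ) ≤ t * 2^k := Int.floor_le _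
    have hfloor2 : t * 2^k < (n:ℝ) + 1 := Int.lt_floor_add_one _
    -- |m/2^(k+1) - t| ≤ (|i|+1)/2^k
    have hmt : |(m:ℝ)/2^(k+1) - t| ≤ (|(i:ℝ)| + 1)/2^k := by
      have hmr : (m:ℝ) = (i:ℝ) + 2*(n:ℝ) := by push_cast [hm]; ring
      have h1 : (m:ℝ)/2^(k+1) - t = (i:ℝ)/2^(k+1) + ((n:ℝ) - t*2^k)/2^k := by
        rw [hmr]; field_simp; ring
      rw [h1]
      have h2 : |((n:ℝ) - t*2^k)/2^k| ≤ 1/2^k := by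
        rw [abs_div, abs_of_pos h2kpos, div_le_div_iff₀ h2kpos h2kpos]
        have : |(n:ℝ) - t*2^k| ≤ 1 := by
          rw [abs_le]; constructor <;> linarith
        nlinarith
      have h3 : |(i:ℝ)/2^(k+1)| ≤ |(i:ℝ)|/2^k := by
        rw [abs_div, abs_of_pos (by positivity : (0:ℝ) < 2^(k+1))]
        apply div_le_div_of_nonneg_left (abs_nonneg _) h2kpos
        · rw [pow_succ]; nlinarith
      calc |(i:ℝ)/2^(k+1) + ((n:ℝ) - t*2^k)/2^k| ≤ _ := abs_add_le _ _
        _ ≤ |(i:ℝ)|/2^k + 1/2^k := add_le_add h3 h2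
        _ = (|(i:ℝ)| + 1)/2^k := by ring
    -- the iterate identity
    have hiter : S^[k+1] x m = ∑ j ∈ J m, a (m - 2*j) * S^[k] x j := by
      rw [Function.iterate_succ_apply', hS, hsum]
    -- approximation bounds
    have hb1 : |S^[k+1] x m - f ((m:ℝ)/2^(k+1))| ≤ ε1 :=
      hK1 (k+1) (le_trans (le_max_left _ _) (Nat.le_succ _)) m
    -- per-term bound
    have hterm : ∀ j ∈ J m, |a (m - 2*j) * (S^[k] x j - f t)| ≤ |a (m - 2*j)| * (2*ε1) := by
      intro j hj
      rw [abs_mul]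
      rcases eq_or_ne (a (m - 2*j)) 0 with h0 | h0
      · simp [h0]
      · apply mul_le_mul_of_nonneg_left _ (abs_nonneg _)
        -- a (m-2j) ≠ 0 so |m - 2j| ≤ N
        have hmem : m - 2*j ∈ T := by simpa [hT] using h0
        have hbd : |m - 2*j| ≤ N := hN _ hmem
        -- |j/2^k - t| ≤ δ
        have hjt : |(j:ℝ)/2^k - t| ≤ δ := by
          have h1 : (j:ℝ)/2^k - t = ((2*j - m : ℤ):ℝ)/2^(k+1) + ((m:ℝ)/2^(k+1) - t) := by
            push_cast; rw [pow_succ]; field_simp; ring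
          have h2 : |((2*j - m : ℤ):ℝ)/2^(k+1)| ≤ (N:ℝ)/2^k := by
            rw [abs_div, abs_of_pos (by positivity : (0:ℝ) < 2^(k+1))]
            have hc : |((2*j - m : ℤ):ℝ)| ≤ (N:ℝ) := by
              rw [← Int.cast_abs]
              exact_mod_cast (by rw [abs_sub_comm]; exact hbd : |2*j - m| ≤ N)
            have hN0' : (0:ℝ) ≤ (N:ℝ) := by exact_mod_cast hN0
            rw [div_le_div_iff₀ (by positivity) h2kpos, pow_succ]
            nlinarith [abs_nonneg ((2*j - m : ℤ):ℝ)]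
          calc |(j:ℝ)/2^k - t| = |((2*j - m : ℤ):ℝ)/2^(k+1) + ((m:ℝ)/2^(k+1) - t)| := by rw [h1]
            _ ≤ |((2*j - m : ℤ):ℝ)/2^(k+1)| + |(m:ℝ)/2^(k+1) - t| := abs_add_le _ _
            _ ≤ (N:ℝ)/2^k + (|(i:ℝ)| + 1)/2^k := add_le_add h2 hmt
            _ = ((N:ℝ) + |(i:ℝ)| + 1)/2^k := by ring
            _ ≤ δ := hclose
        have hb2 : |S^[k] x j - f ((j:ℝ)/2^k)| ≤ ε1 := hK1 k (le_max_left _ _) j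
        have hb3 : |f ((j:ℝ)/2^k) - f t| ≤ ε1 := hδ _ hjt
        calc |S^[k] x j - f t|
            = |(S^[k] x j - f ((j:ℝ)/2^k)) + (f ((j:ℝ)/2^k) - f t)| := by ring_nf
          _ ≤ |S^[k] x j - f ((j:ℝ)/2^k)| + |f ((j:ℝ)/2^k) - f t| := abs_add_le _ _
          _ ≤ ε1 + ε1 := add_le_add hb2 hb3
          _ = 2*ε1 := by ring
    -- sum bound
    have hsumbd : |S^[k+1] x m - σ m * f t| ≤ A * (2*ε1) := by
      have hσm' : σ m = ∑ j ∈ J m, a (m - 2*j) := hsig m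
      have heq : S^[k+1] x m - σ m * f t = ∑ j ∈ J m, a (m - 2*j) * (S^[k] x j - f t) := by
        rw [hiter, hσm', Finset.sum_mul, ← Finset.sum_sub_distrib]
        congr 1; funext j; ring
      rw [heq]
      calc |∑ j ∈ J m, a (m - 2*j) * (S^[k] x j - f t)|
          ≤ ∑ j ∈ J m, |a (m - 2*j) * (S^[k] x j - f t)| := Finset.abs_sum_le_sum_abs _ _
        _ ≤ ∑ j ∈ J m, |a (m - 2*j)| * (2*ε1) := Finset.sum_le_sum hterm
        _ = (∑ j ∈ J m, |a (m - 2*j)|) * (2*ε1) := by rw [Finset.sum_mul]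
        _ ≤ A * (2*ε1) := by
            apply mul_le_mul_of_nonneg_right (hAi m) (by linarith)
    -- f(m/2^(k+1)) close to f t
    have hb4 : |f ((m:ℝ)/2^(k+1)) - f t| ≤ ε1 := by
      apply hδ
      calc |(m:ℝ)/2^(k+1) - t| ≤ (|(i:ℝ)| + 1)/2^k := hmt
        _ ≤ ((N:ℝ) + |(i:ℝ)| + 1)/2^k := by
            gcongr
            have : (0:ℝ) ≤ (N:ℝ) := by exact_mod_cast hN0
            linarith
        _ ≤ δ := hclose
    -- combine
    rw [← hσm]
    calc |σ m * f t - f t|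
        = |(σ m * f t - S^[k+1] x m) + (S^[k+1] x m - f ((m:ℝ)/2^(k+1)))
            + (f ((m:ℝ)/2^(k+1)) - f t)| := by ring_nf
      _ ≤ (|σ m * f t - S^[k+1] x m| + |S^[k+1] x m - f ((m:ℝ)/2^(k+1))|)
            + |f ((m:ℝ)/2^(k+1)) - f t| :=
          le_trans (abs_add_le _ _) (add_le_add_left (abs_add_le _ _) _)
      _ ≤ A * (2*ε1) + ε1 + ε1 := by
          refine add_le_add (add_le_add ?_ hb1) hb4
          rw [abs_sub_comm]; exact hsumbd
      _ = (2*A + 2) * ε1 := by ring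
      _ ≤ (2*A + 3) * ε1 := by nlinarith
      _ = ε := by rw [hε1]; field_simp
  by_contra h
  have habs : 0 < |σ i * f t - f t| := abs_pos.mpr (fun h0 => h (by linarith [sub_eq_zero.mp h0]))
  have := key (|σ i * f t - f t|/2) (by linarith)
  linarith
end

section
/- Let (α_j)_{j=-m}^{m+1} and (β_j)_{j=-m}^{m+1} be real coefficients each summing to 1, and let x_{-m}, …, x_{m+2} be points in ℝ^d. Set x* = Σ_j α_j x_j and x** = Σ_j β_j x_j. Then |x* − x**| ≤ (Σ_{j=-m}^{m+1} |Σ_{i≤j} (α_i − β_i)|) · max_ℓ |x_{ℓ+1} − x_ℓ|, where the maximum is over ℓ = -m, …, m. -/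
/-- Abel summation over an integer interval. -/
lemma Icc_ins (a b : ℤ) (h : a ≤ b + 1) :
    Finset.Icc a (b+1) = insert (b+1) (Finset.Icc a b) := by
  ext j; simp only [Finset.mem_Icc, Finset.mem_insert]; omega

/-- Abel summation over an integer interval. -/
lemma abel_icc {E : Type*} [AddCommGroup E] [Module ℝ E] (g : ℤ → ℝ) (y : ℤ → E) (a : ℤ) :
    ∀ b, a ≤ b → ∑ j ∈ Finset.Icc a b, g j • y j
      = (∑ j ∈ Finset.Icc a b, g j) • y b
        + ∑ j ∈ Finset.Icc a (b-1), (∑ i ∈ Finset.Icc a j, g i) • (y j - y (j+1)) := by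
  refine Int.le_induction ?_ ?_
  · have : Finset.Icc a (a-1) = ∅ := by apply Finset.Icc_eq_empty; omega
    simp [this]
  · intro b hb ih
    have h1 := Icc_ins a b (by omega)
    have h2 : Finset.Icc a (b+1-1) = insert b (Finset.Icc a (b-1)) := by
      have e : b + 1 - 1 = b := by ring
      rw [e, show b = (b-1)+1 by ring, Icc_ins a (b-1) (by omega)]
      norm_num
    have hm1 : (b+1) ∉ Finset.Icc a b := by simp
    have hm2 : b ∉ Finset.Icc a (b-1) := by simp
    rw [h1, h2, Finset.sum_insert hm1, Finset.sum_insert hm1, Finset.sum_insert hm2, ih]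
    have e : b - 1 + 1 = b := by ring
    simp only [add_smul, smul_sub, e]
    abel

/-- Distance between two affine averages of the same points, bounded by
the summed partial differences of the weights times the maximal consecutive distance. -/
theorem stmt_3 (d m : ℕ) (α β : ℤ → ℝ) (x : ℤ → EuclideanSpace ℝ (Fin d))
    (hα : ∑ j ∈ Finset.Icc (-(m:ℤ)) ((m:ℤ)+1), α j = 1)
    (hβ : ∑ j ∈ Finset.Icc (-(m:ℤ)) ((m:ℤ)+1), β j = 1) :
    ‖(∑ j ∈ Finset.Icc (-(m:ℤ)) ((m:ℤ)+1), α j • x j)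
        - ∑ j ∈ Finset.Icc (-(m:ℤ)) ((m:ℤ)+1), β j • x j‖
      ≤ (∑ j ∈ Finset.Icc (-(m:ℤ)) ((m:ℤ)+1),
            |∑ i ∈ Finset.Icc (-(m:ℤ)) j, (α i - β i)|)
        * (Finset.Icc (-(m:ℤ)) (m:ℤ)).sup'
            (Finset.nonempty_Icc.mpr (by omega))
            (fun ℓ => ‖x (ℓ+1) - x ℓ‖) := by
  set a : ℤ := -(m:ℤ)
  set b : ℤ := (m:ℤ)+1
  set g : ℤ → ℝ := fun j => α j - β j with hg
  have hab : a ≤ b := by simp [a, b]; omega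
  have hne : (Finset.Icc a (m:ℤ)).Nonempty := Finset.nonempty_Icc.mpr (by omega)
  set M : ℝ := (Finset.Icc a (m:ℤ)).sup' hne (fun ℓ => ‖x (ℓ+1) - x ℓ‖) with hM
  have hM0 : 0 ≤ M := by
    obtain ⟨ℓ, hℓ⟩ := hne
    exact le_trans (norm_nonneg _) (Finset.le_sup' (fun ℓ => ‖x (ℓ+1) - x ℓ‖) hℓ)
  have hgsum : ∑ j ∈ Finset.Icc a b, g j = 0 := by
    simp only [hg, Finset.sum_sub_distrib, hα, hβ, sub_self]
  have hdiff : (∑ j ∈ Finset.Icc a b, α j • x j) - ∑ j ∈ Finset.Icc a b, β j • x j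
      = ∑ j ∈ Finset.Icc a b, g j • x j := by
    rw [← Finset.sum_sub_distrib]
    congr 1; ext j i; simp [hg]; ring
  have habel := abel_icc g x a b hab
  rw [hgsum, zero_smul, zero_add] at habel
  have hb1 : b - 1 = (m:ℤ) := by simp [b]
  rw [hdiff, habel, hb1]
  calc ‖∑ j ∈ Finset.Icc a (m:ℤ), (∑ i ∈ Finset.Icc a j, g i) • (x j - x (j+1))‖
      ≤ ∑ j ∈ Finset.Icc a (m:ℤ), ‖(∑ i ∈ Finset.Icc a j, g i) • (x j - x (j+1))‖ :=
        norm_sum_le _ _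
    _ ≤ ∑ j ∈ Finset.Icc a (m:ℤ), |∑ i ∈ Finset.Icc a j, g i| * M := by
        apply Finset.sum_le_sum
        intro j hj
        rw [norm_smul, Real.norm_eq_abs]
        apply mul_le_mul_of_nonneg_left _ (abs_nonneg _)
        rw [norm_sub_rev]
        exact Finset.le_sup' (fun ℓ => ‖x (ℓ+1) - x ℓ‖) hj
    _ ≤ ∑ j ∈ Finset.Icc a b, |∑ i ∈ Finset.Icc a j, g i| * M := by
        apply Finset.sum_le_sum_of_subset_of_nonneg
        · apply Finset.Icc_subset_Icc_right; simp [b]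
        · intro j _ _
          exact mul_nonneg (abs_nonneg _) hM0
    _ = (∑ j ∈ Finset.Icc a b, |∑ i ∈ Finset.Icc a j, (α i - β i)|) * M := by
        rw [Finset.sum_mul]
end

section
/- Let (M, d) be a complete metric space in which every pair of points is joined by a geodesic, and let T be a binary subdivision operator on sequences in M that is contractive with factor γ < 1 and displacement-safe with constant C. For input data x with ρ := sup_ℓ d(x_{ℓ+1}, x_ℓ) < ∞, let c_k: ℝ → M be the broken geodesic with c_k(i/2^k) = (T^k x)_i, geodesic on each interval [i/2^k, (i+1)/2^k]. Then for all m, sup_{t∈ℝ} d(c_m(t), c_{m+1}(t)) ≤ ρ γ^m + C ρ γ^m + ρ γ^{m+1}, hence (c_k) is uniformly Cauchy on ℝ and converges uniformly to a continuous limit function T^∞x: ℝ → M. -/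
/-- Convergence of a contractive, displacement-safe subdivision scheme
in a complete geodesic metric space: the broken geodesics `c_k` interpolating
`T^k x` at parameters `i/2^k` satisfy
`dist (c_m t) (c_{m+1} t) ≤ ρ γ^m + C ρ γ^m + ρ γ^{m+1}` and converge uniformly
to a continuous limit. -/
theorem stmt_6 {M : Type*} [MetricSpace M] [CompleteSpace M]
    (hgeo : ∀ p q : M, ∃ g : ℝ → M, g 0 = p ∧ g 1 = q ∧
      ∀ s t : ℝ, s ∈ Set.Icc (0:ℝ) 1 → t ∈ Set.Icc (0:ℝ) 1 →
        dist (g s) (g t) = |s - t| * dist p q)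
    (T : (ℤ → M) → (ℤ → M)) (γ C ρ : ℝ)
    (hγ0 : 0 ≤ γ) (hγ1 : γ < 1) (hC : 0 ≤ C) (hρ0 : 0 ≤ ρ)
    (hcontr : ∀ (y : ℤ → M) (δ : ℝ), (∀ i, dist (y (i+1)) (y i) ≤ δ) →
      ∀ i, dist (T y (i+1)) (T y i) ≤ γ * δ)
    (hdisp : ∀ (y : ℤ → M) (δ : ℝ), (∀ i, dist (y (i+1)) (y i) ≤ δ) →
      ∀ i, dist (T y (2*i)) (y i) ≤ C * δ)
    (x : ℤ → M) (hx : ∀ i, dist (x (i+1)) (x i) ≤ ρ)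
    (c : ℕ → ℝ → M)
    (hcinterp : ∀ (k : ℕ) (i : ℤ), c k ((i:ℝ) / 2^k) = T^[k] x i)
    (hcgeo : ∀ (k : ℕ) (i : ℤ), ∀ s t : ℝ,
      s ∈ Set.Icc ((i:ℝ)/2^k) (((i:ℝ)+1)/2^k) →
      t ∈ Set.Icc ((i:ℝ)/2^k) (((i:ℝ)+1)/2^k) →
        dist (c k s) (c k t)
          = |s - t| * 2^k * dist (T^[k] x i) (T^[k] x (i+1))) :
    (∀ (m : ℕ) (t : ℝ),
        dist (c m t) (c (m+1) t) ≤ ρ * γ^m + C * ρ * γ^m + ρ * γ^(m+1)) ∧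
    ∃ f : ℝ → M, Continuous f ∧ TendstoUniformly c f Filter.atTop := by
  classical
  set y : ℕ → ℤ → M := fun k => T^[k] x with hy
  have hysucc : ∀ k, y (k+1) = T (y k) := by
    intro k; simp [hy, Function.iterate_succ_apply']
  have hA : ∀ k i, dist (y k (i+1)) (y k i) ≤ ρ * γ^k := by
    intro k
    induction k with
    | zero => intro i; simpa [hy] using hx i
    | succ k ih =>
      intro i
      rw [hysucc]
      calc dist (T (y k) (i+1)) (T (y k) i) ≤ γ * (ρ * γ^k) := hcontr (y k) (ρ * γ^k) ih i
        _ = ρ * γ^(k+1) := by ring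
  have hB : ∀ k i, dist (y (k+1) (2*i)) (y k i) ≤ C * (ρ * γ^k) := by
    intro k i
    rw [hysucc]
    exact hdisp (y k) (ρ * γ^k) (hA k) i
  have h2pos : ∀ k : ℕ, (0:ℝ) < 2^k := fun k => by positivity
  have h2ne : ∀ k : ℕ, ((2:ℝ)^k) ≠ 0 := fun k => ne_of_gt (h2pos k)
  have hseg : ∀ (k : ℕ) (i : ℤ) (s t : ℝ),
      s ∈ Set.Icc ((i:ℝ)/2^k) (((i:ℝ)+1)/2^k) →
      t ∈ Set.Icc ((i:ℝ)/2^k) (((i:ℝ)+1)/2^k) →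
      dist (c k s) (c k t) ≤ ρ * γ^k := by
    intro k i s t hs ht
    rw [hcgeo k i s t hs ht]
    have hd : dist (T^[k] x i) (T^[k] x (i+1)) ≤ ρ * γ^k := by
      rw [dist_comm]; exact hA k i
    have habs : |s - t| ≤ 1 / 2^k := by
      rw [abs_sub_le_iff]
      constructor
      · calc s - t ≤ ((i:ℝ)+1)/2^k - (i:ℝ)/2^k := by linarith [hs.2, ht.1]
          _ = 1 / 2^k := by field_simp; ring
      · calc t - s ≤ ((i:ℝ)+1)/2^k - (i:ℝ)/2^k := by linarith [ht.2, hs.1]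
          _ = 1 / 2^k := by field_simp; ring
    have h1 : |s - t| * 2^k ≤ 1 := by
      calc |s - t| * 2^k ≤ (1/2^k) * 2^k :=
            mul_le_mul_of_nonneg_right habs (le_of_lt (h2pos k))
        _ = 1 := by field_simp
    calc |s - t| * 2^k * dist (T^[k] x i) (T^[k] x (i+1))
        ≤ 1 * (ρ * γ^k) := mul_le_mul h1 hd dist_nonneg (by norm_num)
      _ = ρ * γ^k := by ring
  have main : ∀ (m : ℕ) (t : ℝ),
      dist (c m t) (c (m+1) t) ≤ ρ * γ^m + C * ρ * γ^m + ρ * γ^(m+1) := by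
    intro m t
    set i : ℤ := ⌊t * 2^m⌋ with hi
    have hfl : (i:ℝ) ≤ t * 2^m := Int.floor_le _
    have hfu : t * 2^m < (i:ℝ) + 1 := Int.lt_floor_add_one _
    have htm : t ∈ Set.Icc ((i:ℝ)/2^m) (((i:ℝ)+1)/2^m) := by
      constructor
      · rw [div_le_iff₀ (h2pos m)]; exact hfl
      · rw [le_div_iff₀ (h2pos m)]; exact le_of_lt hfu
    have hEl : (2*(i:ℝ))/2^(m+1) = (i:ℝ)/2^m := by
      rw [pow_succ]; field_simp
    have hEr : (2*(i:ℝ)+2)/2^(m+1) = ((i:ℝ)+1)/2^m := by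
      rw [pow_succ]; field_simp
    rcases le_total t ((2*(i:ℝ)+1)/2^(m+1)) with hhalf | hhalf
    · -- left half
      have d1 : dist (c m t) (y m i) ≤ ρ * γ^m := by
        have hm1 : ((i:ℝ)/2^m) ∈ Set.Icc ((i:ℝ)/2^m) (((i:ℝ)+1)/2^m) :=
          ⟨le_refl _, by gcongr <;> linarith⟩
        have := hseg m i t ((i:ℝ)/2^m) htm hm1
        rwa [hcinterp m i] at this
      have d2 : dist (y m i) (y (m+1) (2*i)) ≤ C * (ρ * γ^m) := by
        rw [dist_comm]; exact hB m i
      have d3 : dist (y (m+1) (2*i)) (c (m+1) t) ≤ ρ * γ^(m+1) := by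
        have hm2s : (((2*i:ℤ):ℝ)/2^(m+1)) ∈
            Set.Icc (((2*i:ℤ):ℝ)/2^(m+1)) ((((2*i:ℤ):ℝ)+1)/2^(m+1)) :=
          ⟨le_refl _, by gcongr <;> linarith⟩
        have hm2t : t ∈ Set.Icc (((2*i:ℤ):ℝ)/2^(m+1)) ((((2*i:ℤ):ℝ)+1)/2^(m+1)) := by
          constructor
          · push_cast
            rw [hEl]; exact htm.1
          · push_cast
            exact hhalf
        have := hseg (m+1) (2*i) (((2*i:ℤ):ℝ)/2^(m+1)) t hm2s hm2t
        rwa [hcinterp (m+1) (2*i)] at this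
      calc dist (c m t) (c (m+1) t)
          ≤ dist (c m t) (y m i) + dist (y m i) (y (m+1) (2*i))
            + dist (y (m+1) (2*i)) (c (m+1) t) := dist_triangle4 _ _ _ _
        _ ≤ ρ * γ^m + C * (ρ * γ^m) + ρ * γ^(m+1) := by linarith
        _ = ρ * γ^m + C * ρ * γ^m + ρ * γ^(m+1) := by ring
    · -- right half
      have d1 : dist (c m t) (y m (i+1)) ≤ ρ * γ^m := by
        have hm1 : (((i:ℝ)+1)/2^m) ∈ Set.Icc ((i:ℝ)/2^m) (((i:ℝ)+1)/2^m) :=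
          ⟨by gcongr <;> linarith, le_refl _⟩
        have := hseg m i t (((i:ℝ)+1)/2^m) htm hm1
        have he : c m (((i:ℝ)+1)/2^m) = y m (i+1) := by
          have := hcinterp m (i+1)
          push_cast at this
          exact this
        rwa [he] at this
      have d2 : dist (y m (i+1)) (y (m+1) (2*i+2)) ≤ C * (ρ * γ^m) := by
        have := hB m (i+1)
        have h2 : (2*(i+1) : ℤ) = 2*i+2 := by ring
        rw [h2] at this
        rw [dist_comm]; exact this
      have d3 : dist (y (m+1) (2*i+2)) (c (m+1) t) ≤ ρ * γ^(m+1) := by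
        have hm2s : ((((2*i+1:ℤ):ℝ)+1)/2^(m+1)) ∈
            Set.Icc (((2*i+1:ℤ):ℝ)/2^(m+1)) ((((2*i+1:ℤ):ℝ)+1)/2^(m+1)) :=
          ⟨by gcongr <;> linarith, le_refl _⟩
        have hm2t : t ∈ Set.Icc (((2*i+1:ℤ):ℝ)/2^(m+1)) ((((2*i+1:ℤ):ℝ)+1)/2^(m+1)) := by
          constructor
          · push_cast
            exact hhalf
          · push_cast
            have : (2*(i:ℝ)+1+1) = 2*(i:ℝ)+2 := by ring
            rw [this, hEr]
            exact htm.2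
        have := hseg (m+1) (2*i+1) ((((2*i+1:ℤ):ℝ)+1)/2^(m+1)) t hm2s hm2t
        have he : c (m+1) ((((2*i+1:ℤ):ℝ)+1)/2^(m+1)) = y (m+1) (2*i+2) := by
          have h := hcinterp (m+1) (2*i+2)
          push_cast at h ⊢
          rw [show (2*(i:ℝ)+1+1) = 2*(i:ℝ)+2 from by ring]
          exact h
        rwa [he] at this
      calc dist (c m t) (c (m+1) t)
          ≤ dist (c m t) (y m (i+1)) + dist (y m (i+1)) (y (m+1) (2*i+2))
            + dist (y (m+1) (2*i+2)) (c (m+1) t) := dist_triangle4 _ _ _ _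
        _ ≤ ρ * γ^m + C * (ρ * γ^m) + ρ * γ^(m+1) := by linarith
        _ = ρ * γ^m + C * ρ * γ^m + ρ * γ^(m+1) := by ring
  -- continuity of each c k
  have hcont : ∀ k, Continuous (c k) := by
    intro k
    have hstep : ∀ s t : ℝ, s ≤ t → t ≤ ((⌊s*2^k⌋ : ℝ)+1)/2^k →
        dist (c k s) (c k t) ≤ 2^k * ρ * (t - s) := by
      intro s t hst ht
      set i : ℤ := ⌊s * 2^k⌋ with hi
      have hs_mem : s ∈ Set.Icc ((i:ℝ)/2^k) (((i:ℝ)+1)/2^k) := by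
        constructor
        · rw [div_le_iff₀ (h2pos k)]; exact Int.floor_le _
        · rw [le_div_iff₀ (h2pos k)]; exact le_of_lt (Int.lt_floor_add_one _)
      have ht_mem : t ∈ Set.Icc ((i:ℝ)/2^k) (((i:ℝ)+1)/2^k) :=
        ⟨le_trans hs_mem.1 hst, ht⟩
      rw [hcgeo k i s t hs_mem ht_mem]
      have habs : |s - t| = t - s := by
        rw [abs_sub_comm, abs_of_nonneg (by linarith)]
      rw [habs]
      have hd : dist (T^[k] x i) (T^[k] x (i+1)) ≤ ρ := by
        rw [dist_comm]
        calc dist (T^[k] x (i+1)) (T^[k] x i) ≤ ρ * γ^k := hA k i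
          _ ≤ ρ * 1 := by
              have : γ^k ≤ 1 := pow_le_one₀ hγ0 (le_of_lt hγ1)
              nlinarith
          _ = ρ := by ring
      have h1 : (0:ℝ) ≤ (t - s) * 2^k := by
        have := h2pos k; nlinarith
      calc (t - s) * 2^k * dist (T^[k] x i) (T^[k] x (i+1))
          ≤ (t - s) * 2^k * ρ := mul_le_mul_of_nonneg_left hd h1
        _ = 2^k * ρ * (t - s) := by ring
    have hlip : ∀ n : ℕ, ∀ s t : ℝ, s ≤ t → (⌊t*2^k⌋ - ⌊s*2^k⌋).toNat ≤ n →
        dist (c k s) (c k t) ≤ 2^k * ρ * (t - s) := by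
      intro n
      induction n with
      | zero =>
        intro s t hst hn
        apply hstep s t hst
        have hfl : ⌊t*2^k⌋ ≤ ⌊s*2^k⌋ := by omega
        have : t * 2^k < (⌊s*2^k⌋ : ℝ) + 1 := by
          calc t * 2^k < (⌊t*2^k⌋ : ℝ) + 1 := Int.lt_floor_add_one _
            _ ≤ (⌊s*2^k⌋ : ℝ) + 1 := by
                have : ((⌊t*2^k⌋:ℝ)) ≤ ((⌊s*2^k⌋:ℝ)) := by exact_mod_cast hfl
                linarith
        rw [le_div_iff₀ (h2pos k)]
        linarith
      | succ n ih =>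
        intro s t hst hn
        by_cases hcase : t ≤ ((⌊s*2^k⌋:ℝ)+1)/2^k
        · exact hstep s t hst hcase
        · push_neg at hcase
          set u : ℝ := ((⌊s*2^k⌋:ℝ)+1)/2^k with hu
          have hsu : s ≤ u := by
            rw [hu, le_div_iff₀ (h2pos k)]
            have := Int.lt_floor_add_one (s * 2^k)
            linarith
          have hut : u ≤ t := le_of_lt hcase
          have hu2 : u * 2^k = (⌊s*2^k⌋:ℝ) + 1 := by
            rw [hu]; field_simp
          have hufloor : ⌊u * 2^k⌋ = ⌊s*2^k⌋ + 1 := by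
            rw [hu2]
            exact_mod_cast Int.floor_intCast (R := ℝ) (⌊s*2^k⌋ + 1)
          have htfloor : ⌊s*2^k⌋ + 1 ≤ ⌊t*2^k⌋ := by
            apply Int.le_floor.mpr
            push_cast
            rw [← hu2]
            have := h2pos k
            nlinarith
          have d1 : dist (c k s) (c k u) ≤ 2^k * ρ * (u - s) :=
            hstep s u hsu (le_of_eq rfl)
          have d2 : dist (c k u) (c k t) ≤ 2^k * ρ * (t - u) := by
            apply ih u t hut
            rw [hufloor]
            omega
          calc dist (c k s) (c k t) ≤ dist (c k s) (c k u) + dist (c k u) (c k t) :=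
                dist_triangle _ _ _
            _ ≤ 2^k * ρ * (u - s) + 2^k * ρ * (t - u) := by linarith
            _ = 2^k * ρ * (t - s) := by ring
    have hlip' : LipschitzWith (Real.toNNReal (2^k * ρ)) (c k) := by
      apply LipschitzWith.of_dist_le_mul
      intro a b
      have hnn : (0:ℝ) ≤ 2^k * ρ := by positivity
      rw [Real.coe_toNNReal _ hnn, Real.dist_eq]
      rcases le_total a b with hab | hab
      · have := hlip ((⌊b*2^k⌋ - ⌊a*2^k⌋).toNat) a b hab (le_refl _)
        rw [abs_of_nonpos (by linarith)]
        calc dist (c k a) (c k b) ≤ 2^k * ρ * (b - a) := this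
          _ = 2^k * ρ * -(a - b) := by ring
      · have := hlip ((⌊a*2^k⌋ - ⌊b*2^k⌋).toNat) b a hab (le_refl _)
        rw [dist_comm, abs_of_nonneg (by linarith)]
        calc dist (c k b) (c k a) ≤ 2^k * ρ * (a - b) := this
          _ = 2^k * ρ * (a - b) := by ring
    exact hlip'.continuous
  -- uniform convergence
  set K : ℝ := ρ + C * ρ + ρ * γ with hK
  have hKnn : 0 ≤ K := by positivity
  have hbd : ∀ (m : ℕ) (t : ℝ), dist (c m t) (c (m+1) t) ≤ K * γ^m := by
    intro m t
    calc dist (c m t) (c (m+1) t) ≤ ρ * γ^m + C * ρ * γ^m + ρ * γ^(m+1) := main m t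
      _ = K * γ^m := by rw [hK]; ring
  have hcs : ∀ t, CauchySeq (fun k => c k t) := fun t =>
    cauchySeq_of_le_geometric γ K hγ1 (fun n => hbd n t)
  have hex : ∀ t : ℝ, ∃ l : M, Filter.Tendsto (fun k => c k t) Filter.atTop (nhds l) :=
    fun t => cauchySeq_tendsto_of_complete (hcs t)
  choose f hf using hex
  have hdistf : ∀ (n : ℕ) (t : ℝ), dist (c n t) (f t) ≤ K * γ^n / (1 - γ) := fun n t =>
    dist_le_of_le_geometric_of_tendsto γ K hγ1 (fun m => hbd m t) (hf t) n
  have htu : TendstoUniformly c f Filter.atTop := by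
    rw [Metric.tendstoUniformly_iff]
    intro ε hε
    have h0 : Filter.Tendsto (fun n : ℕ => K / (1 - γ) * γ^n) Filter.atTop (nhds 0) := by
      have := tendsto_pow_atTop_nhds_zero_of_lt_one hγ0 hγ1
      simpa using this.const_mul (K / (1 - γ))
    have hev := h0.eventually (gt_mem_nhds hε)
    filter_upwards [hev] with n hn t
    have : dist (c n t) (f t) ≤ K * γ^n / (1 - γ) := hdistf n t
    have heq : K * γ^n / (1 - γ) = K / (1 - γ) * γ^n := by ring
    rw [dist_comm]
    calc dist (c n t) (f t) ≤ K * γ^n / (1 - γ) := this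
      _ = K / (1 - γ) * γ^n := heq
      _ < ε := hn
  exact ⟨main, f, htu.continuous (Filter.Eventually.of_forall hcont).frequently, htu⟩
end

section
/- Under the hypotheses of the convergence theorem (T contractive with factor γ < 1 and displacement-safe with constant C on a complete geodesic metric space, input data with ρ = sup_ℓ d(x_{ℓ+1}, x_ℓ) < ∞), the limit curve T^∞x is Hölder continuous with exponent ι = −log γ / log 2: for all t₁, t₂ ∈ ℝ with |t₁ − t₂| < 1, d(T^∞x(t₁), T^∞x(t₂)) ≤ D |t₂ − t₁|^ι, where D = 2((Cρ + ρ + γρ)/(1−γ) + ρ). -/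
/-- Hölder continuity of the limit curve `T^∞x` with exponent
`ι = -log γ / log 2` and constant `D = 2((Cρ + ρ + γρ)/(1-γ) + ρ)`. -/
theorem stmt_7 {M : Type*} [MetricSpace M] [CompleteSpace M]
    (hgeo : ∀ p q : M, ∃ g : ℝ → M, g 0 = p ∧ g 1 = q ∧
      ∀ s t : ℝ, s ∈ Set.Icc (0:ℝ) 1 → t ∈ Set.Icc (0:ℝ) 1 →
        dist (g s) (g t) = |s - t| * dist p q)
    (T : (ℤ → M) → (ℤ → M)) (γ C ρ : ℝ)
    (hγ0 : 0 ≤ γ) (hγ1 : γ < 1) (hC : 0 ≤ C) (hρ0 : 0 ≤ ρ)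
    (hcontr : ∀ (y : ℤ → M) (δ : ℝ), (∀ i, dist (y (i+1)) (y i) ≤ δ) →
      ∀ i, dist (T y (i+1)) (T y i) ≤ γ * δ)
    (hdisp : ∀ (y : ℤ → M) (δ : ℝ), (∀ i, dist (y (i+1)) (y i) ≤ δ) →
      ∀ i, dist (T y (2*i)) (y i) ≤ C * δ)
    (x : ℤ → M) (hx : ∀ i, dist (x (i+1)) (x i) ≤ ρ)
    (c : ℕ → ℝ → M)
    (hcinterp : ∀ (k : ℕ) (i : ℤ), c k ((i:ℝ) / 2^k) = T^[k] x i)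
    (hcgeo : ∀ (k : ℕ) (i : ℤ), ∀ s t : ℝ,
      s ∈ Set.Icc ((i:ℝ)/2^k) (((i:ℝ)+1)/2^k) →
      t ∈ Set.Icc ((i:ℝ)/2^k) (((i:ℝ)+1)/2^k) →
        dist (c k s) (c k t)
          = |s - t| * 2^k * dist (T^[k] x i) (T^[k] x (i+1)))
    (f : ℝ → M) (hf : TendstoUniformly c f Filter.atTop) :
    ∀ t₁ t₂ : ℝ, |t₁ - t₂| < 1 →
      dist (f t₁) (f t₂)
        ≤ (2 * ((C * ρ + ρ + γ * ρ) / (1 - γ) + ρ))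
            * |t₂ - t₁| ^ (-(Real.log γ) / Real.log 2) := by
  intro t₁ t₂ hlt
  have h2k : ∀ k : ℕ, (0:ℝ) < 2^k := fun k => by positivity
  have hγρ : ∀ k : ℕ, (0:ℝ) ≤ γ^k * ρ := fun k => mul_nonneg (pow_nonneg hγ0 k) hρ0
  have h1γ : (0:ℝ) < 1 - γ := by linarith
  -- step estimate
  have hstep : ∀ k : ℕ, ∀ i : ℤ, dist (T^[k] x (i+1)) (T^[k] x i) ≤ γ^k * ρ := by
    intro k
    induction k with
    | zero => simpa using hx
    | succ k ih =>
      intro i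
      rw [Function.iterate_succ_apply']
      calc dist (T (T^[k] x) (i+1)) (T (T^[k] x) i) ≤ γ * (γ^k * ρ) :=
            hcontr (T^[k] x) (γ^k * ρ) ih i
        _ = γ^(k+1) * ρ := by ring
  -- node comparison
  have hnode : ∀ (k : ℕ) (i : ℤ), dist (T^[k+1] x (2*i)) (T^[k] x i) ≤ C * (γ^k * ρ) := by
    intro k i
    rw [Function.iterate_succ_apply']
    exact hdisp (T^[k] x) (γ^k * ρ) (hstep k) i
  -- floor facts
  have hfl : ∀ (k : ℕ) (t : ℝ),
      ((⌊t * 2^k⌋ : ℝ))/2^k ≤ t ∧ t < ((⌊t * 2^k⌋:ℝ)+1)/2^k := by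
    intro k t
    constructor
    · rw [div_le_iff₀ (h2k k)]; exact Int.floor_le _
    · rw [lt_div_iff₀ (h2k k)]; exact Int.lt_floor_add_one _
  -- within-segment bound
  have hsegle : ∀ (k : ℕ) (i : ℤ) (s t : ℝ), (i:ℝ)/2^k ≤ s → s ≤ t → t ≤ ((i:ℝ)+1)/2^k →
      dist (c k s) (c k t) ≤ (t - s) * (2^k * (γ^k * ρ)) := by
    intro k i s t h1 h2 h3
    have heq := hcgeo k i s t ⟨h1, le_trans h2 h3⟩ ⟨le_trans h1 h2, h3⟩
    rw [heq, abs_sub_comm, abs_of_nonneg (by linarith : (0:ℝ) ≤ t - s)]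
    have hd : dist (T^[k] x i) (T^[k] x (i+1)) ≤ γ^k * ρ := by
      rw [dist_comm]; exact hstep k i
    calc (t - s) * 2^k * dist (T^[k] x i) (T^[k] x (i+1))
        ≤ (t - s) * 2^k * (γ^k * ρ) :=
          mul_le_mul_of_nonneg_left hd (mul_nonneg (by linarith) (h2k k).le)
      _ = (t - s) * (2^k * (γ^k * ρ)) := by ring
  -- global Lipschitz-type estimate
  have clip : ∀ (k n : ℕ) (s t : ℝ), s ≤ t → (⌊t * 2^k⌋ - ⌊s * 2^k⌋).toNat ≤ n →
      dist (c k s) (c k t) ≤ (t - s) * (2^k * (γ^k * ρ)) := by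
    intro k n
    induction n with
    | zero =>
      intro s t hst hn
      have hmono : ⌊s * 2^k⌋ ≤ ⌊t * 2^k⌋ :=
        Int.floor_le_floor (by nlinarith [h2k k])
      have heq : ⌊s * 2^k⌋ = ⌊t * 2^k⌋ := by omega
      exact hsegle k ⌊s * 2^k⌋ s t (hfl k s).1 hst (by rw [heq]; exact (hfl k t).2.le)
    | succ n ih =>
      intro s t hst hn
      by_cases heq : ⌊s * 2^k⌋ = ⌊t * 2^k⌋
      · exact hsegle k ⌊s * 2^k⌋ s t (hfl k s).1 hst (by rw [heq]; exact (hfl k t).2.le)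
      · have hmono : ⌊s * 2^k⌋ ≤ ⌊t * 2^k⌋ :=
          Int.floor_le_floor (by nlinarith [h2k k])
        set i := ⌊s * 2^k⌋ with hi
        have hsm : s ≤ ((i:ℝ)+1)/2^k := (hfl k s).2.le
        have hmt : ((i:ℝ)+1)/2^k ≤ t := by
          rw [div_le_iff₀ (h2k k)]
          have h1 : (i + 1 : ℤ) ≤ ⌊t * 2^k⌋ := by omega
          calc ((i:ℝ)+1) = ((i+1 : ℤ):ℝ) := by push_cast; ring
            _ ≤ (⌊t*2^k⌋ : ℝ) := by exact_mod_cast h1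
            _ ≤ t * 2^k := Int.floor_le _
        have hflm : ⌊(((i:ℝ)+1)/2^k) * 2^k⌋ = i + 1 := by
          rw [div_mul_cancel₀ _ (ne_of_gt (h2k k)),
            show ((i:ℝ)+1) = ((i+1 : ℤ):ℝ) by push_cast; ring, Int.floor_intCast]
        have h1 : dist (c k s) (c k (((i:ℝ)+1)/2^k)) ≤ (((i:ℝ)+1)/2^k - s) * (2^k * (γ^k * ρ)) :=
          hsegle k i s _ (hfl k s).1 hsm le_rfl
        have h2 : dist (c k (((i:ℝ)+1)/2^k)) (c k t) ≤ (t - ((i:ℝ)+1)/2^k) * (2^k * (γ^k * ρ)) := by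
          apply ih _ t hmt
          rw [hflm]; omega
        calc dist (c k s) (c k t)
            ≤ dist (c k s) (c k (((i:ℝ)+1)/2^k)) + dist (c k (((i:ℝ)+1)/2^k)) (c k t) :=
              dist_triangle _ _ _
          _ ≤ (((i:ℝ)+1)/2^k - s) * (2^k * (γ^k * ρ)) + (t - ((i:ℝ)+1)/2^k) * (2^k * (γ^k * ρ)) :=
              add_le_add h1 h2
          _ = (t - s) * (2^k * (γ^k * ρ)) := by ring
  set B := C * ρ + ρ + γ * ρ with hB
  have hB0 : (0:ℝ) ≤ B := by
    rw [hB]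
    have := mul_nonneg hC hρ0
    have := mul_nonneg hγ0 hρ0
    linarith
  have haux : ∀ (k : ℕ) (δ : ℝ), δ ≤ 1/2^k → δ * (2^k * (γ^k * ρ)) ≤ γ^k * ρ := by
    intro k δ hδ
    calc δ * (2^k * (γ^k * ρ)) ≤ (1/2^k) * (2^k * (γ^k * ρ)) :=
          mul_le_mul_of_nonneg_right hδ (mul_nonneg (h2k k).le (hγρ k))
      _ = γ^k * ρ := by field_simp
  have hconsec : ∀ (k : ℕ) (t : ℝ), dist (c (k+1) t) (c k t) ≤ B * γ^k := by
    intro k t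
    have hil : (↑⌊t * 2^k⌋:ℝ) ≤ t * 2^k := Int.floor_le _
    have hir : t * 2^k < (↑⌊t * 2^k⌋:ℝ) + 1 := Int.lt_floor_add_one _
    have hij : ⌊t * 2^(k+1)⌋ = 2*⌊t * 2^k⌋ ∨ ⌊t * 2^(k+1)⌋ = 2*⌊t * 2^k⌋ + 1 := by
      have h1 : (2*⌊t * 2^k⌋ : ℤ) ≤ ⌊t * 2^(k+1)⌋ := by
        apply Int.le_floor.2
        push_cast
        rw [pow_succ]
        nlinarith
      have h2 : ⌊t * 2^(k+1)⌋ < 2*⌊t * 2^k⌋ + 2 := by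
        apply Int.floor_lt.2
        push_cast
        rw [pow_succ]
        nlinarith
      omega
    have hkl := (hfl k t).1
    have hkr := (hfl k t).2
    have hjl := (hfl (k+1) t).1
    have hjr := (hfl (k+1) t).2
    have hA3 : dist (c k ((↑⌊t * 2^k⌋:ℝ)/2^k)) (c k t) ≤ γ^k * ρ := by
      calc dist (c k ((↑⌊t * 2^k⌋:ℝ)/2^k)) (c k t)
          ≤ (t - (↑⌊t * 2^k⌋:ℝ)/2^k) * (2^k * (γ^k * ρ)) :=
            hsegle k ⌊t * 2^k⌋ _ t le_rfl hkl hkr.le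
        _ ≤ γ^k * ρ := by
            apply haux
            have : (↑⌊t * 2^k⌋:ℝ)/2^k + 1/2^k = ((↑⌊t * 2^k⌋:ℝ)+1)/2^k := by ring
            linarith [hkr]
    rcases hij with hc | hc
    · rw [hc] at hjl hjr
      have hA1 : dist (c (k+1) t) (c (k+1) ((↑(2*⌊t * 2^k⌋):ℝ)/2^(k+1))) ≤ γ^(k+1) * ρ := by
        rw [dist_comm]
        calc dist (c (k+1) ((↑(2*⌊t * 2^k⌋):ℝ)/2^(k+1))) (c (k+1) t)
            ≤ (t - (↑(2*⌊t * 2^k⌋):ℝ)/2^(k+1)) * (2^(k+1) * (γ^(k+1) * ρ)) :=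
              hsegle (k+1) (2*⌊t * 2^k⌋) _ t le_rfl hjl hjr.le
          _ ≤ γ^(k+1) * ρ := by
              apply haux
              have : (↑(2*⌊t * 2^k⌋):ℝ)/2^(k+1) + 1/2^(k+1)
                  = ((↑(2*⌊t * 2^k⌋):ℝ)+1)/2^(k+1) := by ring
              linarith [hjr]
      have hA2 : dist (c (k+1) ((↑(2*⌊t * 2^k⌋):ℝ)/2^(k+1))) (c k ((↑⌊t * 2^k⌋:ℝ)/2^k))
          ≤ C * (γ^k * ρ) := by
        rw [hcinterp (k+1) (2*⌊t * 2^k⌋), hcinterp k ⌊t * 2^k⌋]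
        exact hnode k ⌊t * 2^k⌋
      calc dist (c (k+1) t) (c k t)
          ≤ dist (c (k+1) t) (c (k+1) ((↑(2*⌊t * 2^k⌋):ℝ)/2^(k+1)))
            + dist (c (k+1) ((↑(2*⌊t * 2^k⌋):ℝ)/2^(k+1))) (c k ((↑⌊t * 2^k⌋:ℝ)/2^k))
            + dist (c k ((↑⌊t * 2^k⌋:ℝ)/2^k)) (c k t) := dist_triangle4 _ _ _ _
        _ ≤ γ^(k+1) * ρ + C * (γ^k * ρ) + γ^k * ρ := by
            exact add_le_add (add_le_add hA1 hA2) hA3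
        _ = B * γ^k := by rw [hB, pow_succ]; ring
    · -- right subsegment: via node 2(i+1) at level k+1 and node i+1 at level k
      rw [hc] at hjl hjr
      have hcast : ((2*(⌊t * 2^k⌋+1) : ℤ):ℝ) = ((2*⌊t * 2^k⌋+1 : ℤ):ℝ) + 1 := by
        push_cast; ring
      have hcast2 : ((⌊t * 2^k⌋+1 : ℤ):ℝ) = (↑⌊t * 2^k⌋:ℝ) + 1 := by push_cast; ring
      have hA1 : dist (c (k+1) t) (c (k+1) ((↑(2*(⌊t * 2^k⌋+1)):ℝ)/2^(k+1))) ≤ γ^(k+1) * ρ := by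
        calc dist (c (k+1) t) (c (k+1) ((↑(2*(⌊t * 2^k⌋+1)):ℝ)/2^(k+1)))
            ≤ ((↑(2*(⌊t * 2^k⌋+1)):ℝ)/2^(k+1) - t) * (2^(k+1) * (γ^(k+1) * ρ)) :=
              hsegle (k+1) (2*⌊t * 2^k⌋+1) t _ hjl
                (by rw [hcast]; exact hjr.le) (by rw [hcast])
          _ ≤ γ^(k+1) * ρ := by
              apply haux
              rw [hcast]
              have h2 : ((↑(2*⌊t * 2^k⌋+1:ℤ):ℝ)+1)/2^(k+1)
                  = (↑(2*⌊t * 2^k⌋+1:ℤ):ℝ)/2^(k+1) + 1/2^(k+1) := by ring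
              linarith
      have hA2 : dist (c (k+1) ((↑(2*(⌊t * 2^k⌋+1)):ℝ)/2^(k+1))) (c k ((↑(⌊t * 2^k⌋+1):ℝ)/2^k))
          ≤ C * (γ^k * ρ) := by
        rw [hcinterp (k+1) (2*(⌊t * 2^k⌋+1)), hcinterp k (⌊t * 2^k⌋+1)]
        exact hnode k (⌊t * 2^k⌋+1)
      have hA3' : dist (c k ((↑(⌊t * 2^k⌋+1):ℝ)/2^k)) (c k t) ≤ γ^k * ρ := by
        rw [dist_comm]
        calc dist (c k t) (c k ((↑(⌊t * 2^k⌋+1):ℝ)/2^k))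
            ≤ ((↑(⌊t * 2^k⌋+1):ℝ)/2^k - t) * (2^k * (γ^k * ρ)) :=
              hsegle k ⌊t * 2^k⌋ t _ hkl (by rw [hcast2]; exact hkr.le) (by rw [hcast2])
          _ ≤ γ^k * ρ := by
              apply haux
              rw [hcast2]
              have h2 : ((↑⌊t * 2^k⌋:ℝ)+1)/2^k = (↑⌊t * 2^k⌋:ℝ)/2^k + 1/2^k := by ring
              linarith
      calc dist (c (k+1) t) (c k t)
          ≤ dist (c (k+1) t) (c (k+1) ((↑(2*(⌊t * 2^k⌋+1)):ℝ)/2^(k+1)))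
            + dist (c (k+1) ((↑(2*(⌊t * 2^k⌋+1)):ℝ)/2^(k+1))) (c k ((↑(⌊t * 2^k⌋+1):ℝ)/2^k))
            + dist (c k ((↑(⌊t * 2^k⌋+1):ℝ)/2^k)) (c k t) := dist_triangle4 _ _ _ _
        _ ≤ γ^(k+1) * ρ + C * (γ^k * ρ) + γ^k * ρ := add_le_add (add_le_add hA1 hA2) hA3'
        _ = B * γ^k := by rw [hB, pow_succ]; ring
  -- geometric tail bound
  have hgap : ∀ (k n : ℕ) (t : ℝ),
      dist (c (k+n) t) (c k t) ≤ B * γ^k * ∑ j ∈ Finset.range n, γ^j := by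
    intro k n t
    induction n with
    | zero => simp
    | succ n ih =>
      calc dist (c (k+(n+1)) t) (c k t)
          ≤ dist (c (k+n+1) t) (c (k+n) t) + dist (c (k+n) t) (c k t) := dist_triangle _ _ _
        _ ≤ B * γ^(k+n) + B * γ^k * ∑ j ∈ Finset.range n, γ^j :=
            add_le_add (hconsec (k+n) t) ih
        _ = B * γ^k * ∑ j ∈ Finset.range (n+1), γ^j := by
            rw [Finset.sum_range_succ, pow_add]; ring
  have hsum : ∀ n : ℕ, ∑ j ∈ Finset.range n, γ^j ≤ (1-γ)⁻¹ := by
    intro n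
    rw [← tsum_geometric_of_lt_one hγ0 hγ1]
    exact Summable.sum_le_tsum _ (fun i _ => pow_nonneg hγ0 i) (summable_geometric_of_lt_one hγ0 hγ1)
  have htail : ∀ (k : ℕ) (t : ℝ), dist (f t) (c k t) ≤ B * γ^k * (1-γ)⁻¹ := by
    intro k t
    apply le_of_tendsto (Filter.Tendsto.dist (hf.tendsto_at t) tendsto_const_nhds)
    filter_upwards [Filter.eventually_ge_atTop k] with m hm
    obtain ⟨n, rfl⟩ := Nat.exists_eq_add_of_le hm
    calc dist (c (k+n) t) (c k t) ≤ B * γ^k * ∑ j ∈ Finset.range n, γ^j := hgap k n t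
      _ ≤ B * γ^k * (1-γ)⁻¹ :=
          mul_le_mul_of_nonneg_left (hsum n) (mul_nonneg hB0 (pow_nonneg hγ0 k))
  -- the Hölder constant
  set D := 2 * (B / (1 - γ) + ρ) with hD
  have hD0 : (0:ℝ) ≤ D := by
    rw [hD]
    have : (0:ℝ) ≤ B / (1-γ) := div_nonneg hB0 h1γ.le
    linarith
  set ι := -Real.log γ / Real.log 2 with hι
  -- trivial case
  rcases eq_or_ne t₁ t₂ with rfl | hne
  · rw [dist_self]
    exact mul_nonneg hD0 (Real.rpow_nonneg (abs_nonneg _) _)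
  -- choose the dyadic scale k
  have hu0 : (0:ℝ) < |t₂ - t₁| := abs_pos.2 (sub_ne_zero.2 hne.symm)
  have hu1 : |t₂ - t₁| < 1 := by rw [abs_sub_comm]; exact hlt
  have hex : ∃ n : ℕ, (1/2:ℝ)^n ≤ |t₂ - t₁| := by
    obtain ⟨n, hn⟩ := exists_pow_lt_of_lt_one hu0 (by norm_num : (1/2:ℝ) < 1)
    exact ⟨n, hn.le⟩
  have hk1 : (1/2:ℝ)^(Nat.find hex) ≤ |t₂ - t₁| := Nat.find_spec hex
  have hkpos : 1 ≤ Nat.find hex := by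
    rcases Nat.eq_zero_or_pos (Nat.find hex) with h0 | h
    · exfalso; rw [h0] at hk1; simp at hk1; linarith
    · exact h
  obtain ⟨m, hm⟩ : ∃ m, Nat.find hex = m + 1 := ⟨Nat.find hex - 1, by omega⟩
  have hk2 : |t₂ - t₁| < (1/2:ℝ)^m := by
    have := Nat.find_min hex (show m < Nat.find hex by omega)
    push_neg at this
    exact this
  have hu2 : |t₂ - t₁| * 2^(Nat.find hex) ≤ 2 := by
    rw [hm]
    have hpow : (1/2:ℝ)^m * 2^m = 1 := by
      rw [← mul_pow]; norm_num
    have h2m : (0:ℝ) < 2^m := by positivity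
    calc |t₂ - t₁| * 2^(m+1) ≤ (1/2:ℝ)^m * 2^(m+1) :=
          mul_le_mul_of_nonneg_right hk2.le (by positivity)
      _ = 2 := by rw [pow_succ]; nlinarith [hpow]
  -- the key estimate at scale k
  have key : ∀ a b : ℝ, a ≤ b → b - a = |t₂ - t₁| →
      dist (f a) (f b) ≤ D * γ^(Nat.find hex) := by
    intro a b hab hba
    have h1 := htail (Nat.find hex) a
    have h2 : dist (c (Nat.find hex) b) (f b) ≤ B * γ^(Nat.find hex) * (1-γ)⁻¹ := by
      rw [dist_comm]; exact htail (Nat.find hex) b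
    have h3 : dist (c (Nat.find hex) a) (c (Nat.find hex) b) ≤ 2 * (γ^(Nat.find hex) * ρ) := by
      calc dist (c (Nat.find hex) a) (c (Nat.find hex) b)
          ≤ (b - a) * (2^(Nat.find hex) * (γ^(Nat.find hex) * ρ)) :=
            clip (Nat.find hex) _ a b hab le_rfl
        _ = (|t₂ - t₁| * 2^(Nat.find hex)) * (γ^(Nat.find hex) * ρ) := by rw [hba]; ring
        _ ≤ 2 * (γ^(Nat.find hex) * ρ) :=
            mul_le_mul_of_nonneg_right hu2 (hγρ (Nat.find hex))
    calc dist (f a) (f b)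
        ≤ dist (f a) (c (Nat.find hex) a) + dist (c (Nat.find hex) a) (c (Nat.find hex) b)
          + dist (c (Nat.find hex) b) (f b) := dist_triangle4 _ _ _ _
      _ ≤ B * γ^(Nat.find hex) * (1-γ)⁻¹ + 2 * (γ^(Nat.find hex) * ρ)
          + B * γ^(Nat.find hex) * (1-γ)⁻¹ := add_le_add (add_le_add h1 h3) h2
      _ = D * γ^(Nat.find hex) := by
          rw [hD]
          field_simp
          ring
  -- γ^k ≤ |t₂ - t₁| ^ ι
  have hγk : γ^(Nat.find hex) ≤ |t₂ - t₁| ^ ι := by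
    rcases eq_or_lt_of_le hγ0 with h0 | hγpos
    · rw [← h0, zero_pow (by omega : Nat.find hex ≠ 0)]
      exact Real.rpow_nonneg hu0.le ι
    · have hlg : Real.log γ < 0 := Real.log_neg hγpos hγ1
      have hl2 : (0:ℝ) < Real.log 2 := Real.log_pos (by norm_num)
      have hι0 : 0 ≤ ι := by
        rw [hι]; exact div_nonneg (by linarith) hl2.le
      have hlu : -(Nat.find hex : ℝ) * Real.log 2 ≤ Real.log |t₂ - t₁| := by
        have h := Real.log_le_log (by positivity) hk1
        simp only [Real.log_pow, one_div, Real.log_inv] at h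
        linarith
      have hmul : (Nat.find hex : ℝ) * Real.log γ ≤ ι * Real.log |t₂ - t₁| := by
        have h := mul_le_mul_of_nonneg_left hlu hι0
        have heq : ι * (-(Nat.find hex : ℝ) * Real.log 2) = (Nat.find hex : ℝ) * Real.log γ := by
          rw [hι]; field_simp
        linarith [h, heq]
      calc γ^(Nat.find hex) = Real.exp (Real.log γ * (Nat.find hex : ℝ)) := by
            rw [← Real.exp_log (pow_pos hγpos (Nat.find hex)), Real.log_pow, mul_comm]
        _ ≤ Real.exp (Real.log |t₂ - t₁| * ι) := Real.exp_le_exp.2 (by nlinarith [hmul])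
        _ = |t₂ - t₁| ^ ι := (Real.rpow_def_of_pos hu0 ι).symm
  -- conclude
  have hfinal : D * γ^(Nat.find hex) ≤ D * |t₂ - t₁| ^ ι :=
    mul_le_mul_of_nonneg_left hγk hD0
  rcases le_total t₁ t₂ with hle | hle
  · exact le_trans (key t₁ t₂ hle (abs_of_nonneg (by linarith : (0:ℝ) ≤ t₂ - t₁)).symm) hfinal
  · rw [dist_comm]
    refine le_trans (key t₂ t₁ hle ?_) hfinal
    rw [abs_of_nonpos (by linarith : t₂ - t₁ ≤ 0)]
    ring
end

section
/- Let (α_j)_{j=-m}^{m+1}, (β_j)_{j=-m}^{m+1} be the coefficients of the two rules of a binary linear scheme S, i.e., (Sx)_{2i} = Σ_j α_j x_{i+j} and (Sx)_{2i+1} = Σ_j β_j x_{i+j}, with Σ_j α_j = Σ_j β_j = 1 and all α_j, β_j ≥ 0 (nonnegative mask). If additionally the sequences of partial sums satisfy γ := max_{r∈{1,2}} Σ_j |γ^{(r+1)}_j − γ^{(r)}_j| < 1 (with γ^{(r)}_j = Σ_{i≤j} a_{r-2i} and mask a determined by α, β), then for sequences x in any normed vector space, sup_i ‖(Sx)_{i+1}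 − (Sx)_i‖ ≤ γ · sup_i ‖x_{i+1} − x_i‖. -/
/-- The mask `a` of the binary scheme with even rule coefficients `α` and odd rule
coefficients `β`: `a (-2j) = α j` and `a (1-2j) = β j`. -/
def maskOf (α β : ℤ → ℝ) : ℤ → ℝ := fun ℓ =>
  if ℓ % 2 = 0 then α (-(ℓ/2)) else β ((1-ℓ)/2)

lemma sum_shift' {M : Type*} [AddCommMonoid M] (f : ℤ → M) (a b c : ℤ) :
    ∑ j ∈ Finset.Icc (a+c) (b+c), f j = ∑ j ∈ Finset.Icc a b, f (j+c) := by
  rw [← Finset.map_add_right_Icc, Finset.sum_map]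
  rfl

lemma abel_bound {V : Type*} [NormedAddCommGroup V] [NormedSpace ℝ V]
    (a b : ℤ) (c : ℤ → ℝ) (y : ℤ → V) (δ : ℝ)
    (htot : ∑ k ∈ Finset.Icc a b, c k = 0)
    (hy : ∀ j, ‖y (j+1) - y j‖ ≤ δ) :
    ‖∑ j ∈ Finset.Icc a b, c j • y j‖ ≤
      (∑ j ∈ Finset.Icc a (b-1), |∑ k ∈ Finset.Icc a j, c k|) * δ := by
  rcases lt_or_ge b a with hba | hab
  · rw [Finset.Icc_eq_empty (by omega), Finset.Icc_eq_empty (show ¬ a ≤ b - 1 by omega)]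
    simp
  set C : ℤ → ℝ := fun j => ∑ k ∈ Finset.Icc a j, c k with hC
  have hinsert : ∀ j : ℤ, a ≤ j → Finset.Icc a j = insert j (Finset.Icc a (j-1)) := by
    intro j hj; ext t; simp only [Finset.mem_Icc, Finset.mem_insert]; omega
  have hnot : ∀ j : ℤ, j ∉ Finset.Icc a (j-1) := by
    intro j; simp only [Finset.mem_Icc]; omega
  have hstep : ∀ j, a ≤ j → c j = C j - C (j-1) := by
    intro j hj
    simp only [hC]
    rw [hinsert j hj, Finset.sum_insert (hnot j)]
    ring
  have hCb : C b = 0 := htot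
  have hCa : C (a-1) = 0 := by
    simp only [hC]; rw [Finset.Icc_eq_empty (by omega), Finset.sum_empty]
  have key : ∑ j ∈ Finset.Icc a b, c j • y j
      = ∑ j ∈ Finset.Icc a (b-1), C j • (y j - y (j+1)) := by
    have h1 : ∑ j ∈ Finset.Icc a b, c j • y j
        = ∑ j ∈ Finset.Icc a b, (C j • y j - C (j-1) • y j) := by
      refine Finset.sum_congr rfl fun j hj => ?_
      rw [hstep j (Finset.mem_Icc.1 hj).1, sub_smul]
    rw [h1, Finset.sum_sub_distrib]
    have h2 : ∑ j ∈ Finset.Icc a b, C j • y j = ∑ j ∈ Finset.Icc a (b-1), C j • y j := by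
      rw [hinsert b hab, Finset.sum_insert (hnot b), hCb, zero_smul, zero_add]
    have h3 : ∑ j ∈ Finset.Icc a b, C (j-1) • y j
        = ∑ j ∈ Finset.Icc a (b-1), C j • y (j+1) := by
      have hs := sum_shift' (fun j => C (j-1) • y j) (a-1) (b-1) 1
      rw [show a-1+1 = a by ring, show b-1+1 = b by ring] at hs
      simp only [add_sub_cancel_right] at hs
      rw [hs]
      have h4 : Finset.Icc (a-1) (b-1) = insert (a-1) (Finset.Icc a (b-1)) := by
        ext t; simp only [Finset.mem_Icc, Finset.mem_insert]; omega
      rw [h4, Finset.sum_insert (by simp only [Finset.mem_Icc]; omega), hCa, zero_smul, zero_add]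
    rw [h2, h3, ← Finset.sum_sub_distrib]
    exact Finset.sum_congr rfl fun j _ => (smul_sub _ _ _).symm
  rw [key]
  calc ‖∑ j ∈ Finset.Icc a (b-1), C j • (y j - y (j+1))‖
      ≤ ∑ j ∈ Finset.Icc a (b-1), ‖C j • (y j - y (j+1))‖ := norm_sum_le _ _
    _ ≤ ∑ j ∈ Finset.Icc a (b-1), |C j| * δ := by
        refine Finset.sum_le_sum fun j _ => ?_
        rw [norm_smul, Real.norm_eq_abs, norm_sub_rev]
        exact mul_le_mul_of_nonneg_left (hy j) (abs_nonneg _)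
    _ = (∑ j ∈ Finset.Icc a (b-1), |C j|) * δ := (Finset.sum_mul _ _ _).symm

/-- A binary scheme with nonnegative mask whose contractivity factor
`γ = max_{r∈{1,2}} ∑_j |γ^{(r+1)}_j − γ^{(r)}_j| < 1` contracts consecutive
differences: `sup_i ‖(Sx)_{i+1} − (Sx)_i‖ ≤ γ · sup_i ‖x_{i+1} − x_i‖`. -/
theorem stmt_10 {V : Type*} [NormedAddCommGroup V] [NormedSpace ℝ V]
    (m : ℕ) (α β : ℤ → ℝ)
    (hαsupp : ∀ j, j ∉ Finset.Icc (-(m:ℤ)) ((m:ℤ)+1) → α j = 0)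
    (hβsupp : ∀ j, j ∉ Finset.Icc (-(m:ℤ)) ((m:ℤ)+1) → β j = 0)
    (hα1 : ∑ j ∈ Finset.Icc (-(m:ℤ)) ((m:ℤ)+1), α j = 1)
    (hβ1 : ∑ j ∈ Finset.Icc (-(m:ℤ)) ((m:ℤ)+1), β j = 1)
    (hαpos : ∀ j, 0 ≤ α j) (hβpos : ∀ j, 0 ≤ β j)
    (S : (ℤ → V) → (ℤ → V))
    (hSeven : ∀ (x : ℤ → V) (i : ℤ),
      S x (2*i) = ∑ j ∈ Finset.Icc (-(m:ℤ)) ((m:ℤ)+1), α j • x (i+j))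
    (hSodd : ∀ (x : ℤ → V) (i : ℤ),
      S x (2*i+1) = ∑ j ∈ Finset.Icc (-(m:ℤ)) ((m:ℤ)+1), β j • x (i+j))
    (γ : ℝ)
    (hγdef : γ = max
      (∑ᶠ j : ℤ, |(∑ᶠ i ∈ {i : ℤ | i ≤ j}, maskOf α β (2 - 2*i))
          - ∑ᶠ i ∈ {i : ℤ | i ≤ j}, maskOf α β (1 - 2*i)|)
      (∑ᶠ j : ℤ, |(∑ᶠ i ∈ {i : ℤ | i ≤ j}, maskOf α β (3 - 2*i))
          - ∑ᶠ i ∈ {i : ℤ | i ≤ j}, maskOf α β (2 - 2*i)|))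
    (hγ : γ < 1)
    (x : ℤ → V) (δ : ℝ) (hδ : ∀ i, ‖x (i+1) - x i‖ ≤ δ) :
    ∀ i, ‖S x (i+1) - S x i‖ ≤ γ * δ := by
  set M : ℤ := (m : ℤ) with hM
  set A : ℤ → ℝ := fun j => ∑ k ∈ Finset.Icc (-M) j, α k with hA
  set B : ℤ → ℝ := fun j => ∑ k ∈ Finset.Icc (-M) j, β k with hB
  have hα0 : ∀ j : ℤ, (j < -M ∨ M+1 < j) → α j = 0 := fun j hj =>
    hαsupp j (by simp only [Finset.mem_Icc]; omega)
  have hβ0 : ∀ j : ℤ, (j < -M ∨ M+1 < j) → β j = 0 := fun j hj =>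
    hβsupp j (by simp only [Finset.mem_Icc]; omega)
  have hA1 : ∀ j, M+1 ≤ j → A j = 1 := by
    intro j hj
    show ∑ k ∈ Finset.Icc (-M) j, α k = 1
    rw [← hα1]
    exact (Finset.sum_subset (Finset.Icc_subset_Icc le_rfl (by omega))
      (fun t _ hnt => hαsupp t hnt)).symm
  have hB1 : ∀ j, M+1 ≤ j → B j = 1 := by
    intro j hj
    show ∑ k ∈ Finset.Icc (-M) j, β k = 1
    rw [← hβ1]
    exact (Finset.sum_subset (Finset.Icc_subset_Icc le_rfl (by omega))
      (fun t _ hnt => hβsupp t hnt)).symm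
  have hAneg : ∀ j, j < -M → A j = 0 := by
    intro j hj
    show ∑ k ∈ Finset.Icc (-M) j, α k = 0
    rw [Finset.Icc_eq_empty (by omega), Finset.sum_empty]
  have hBneg : ∀ j, j < -M → B j = 0 := by
    intro j hj
    show ∑ k ∈ Finset.Icc (-M) j, β k = 0
    rw [Finset.Icc_eq_empty (by omega), Finset.sum_empty]
  -- mask computations
  have hmask1 : ∀ i : ℤ, maskOf α β (1 - 2*i) = β i := by
    intro i
    simp only [maskOf]
    rw [if_neg (by omega), show (1-(1-2*i))/2 = i by omega]
  have hmask2 : ∀ i : ℤ, maskOf α β (2 - 2*i) = α (i-1) := by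
    intro i
    simp only [maskOf]
    rw [if_pos (by omega), show -((2-2*i)/2) = i - 1 by omega]
  have hmask3 : ∀ i : ℤ, maskOf α β (3 - 2*i) = β (i-1) := by
    intro i
    simp only [maskOf]
    rw [if_neg (by omega), show (1-(3-2*i))/2 = i - 1 by omega]
  -- inner finsums
  have hinner : ∀ (f : ℤ → ℝ) (a : ℤ), (∀ i, i < a → f i = 0) → ∀ j : ℤ,
      ∑ᶠ i ∈ {i : ℤ | i ≤ j}, f i = ∑ i ∈ Finset.Icc a j, f i := by
    intro f a hf j
    apply finsum_mem_eq_sum_of_inter_support_eq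
    ext t
    simp only [Set.mem_inter_iff, Set.mem_setOf_eq, Function.mem_support, Finset.coe_Icc,
      Set.mem_Icc]
    constructor
    · rintro ⟨h1, h2⟩
      refine ⟨⟨?_, h1⟩, h2⟩
      by_contra h
      exact h2 (hf t (by omega))
    · rintro ⟨⟨_, h1⟩, h2⟩; exact ⟨h1, h2⟩
  have hsum1 : ∀ j : ℤ, ∑ᶠ i ∈ {i : ℤ | i ≤ j}, maskOf α β (1 - 2*i) = B j := by
    intro j
    rw [finsum_mem_congr rfl (fun i _ => hmask1 i),
      hinner β (-M) (fun i hi => hβ0 i (Or.inl hi)) j]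
  have hsum2 : ∀ j : ℤ, ∑ᶠ i ∈ {i : ℤ | i ≤ j}, maskOf α β (2 - 2*i) = A (j-1) := by
    intro j
    rw [finsum_mem_congr rfl (fun i _ => hmask2 i),
      hinner (fun i => α (i-1)) (-M+1) (fun i hi => hα0 (i-1) (Or.inl (by omega))) j]
    have hs := sum_shift' (fun i => α (i-1)) (-M) (j-1) 1
    rw [show j-1+1 = j by ring] at hs
    simp only [add_sub_cancel_right] at hs
    exact hs
  have hsum3 : ∀ j : ℤ, ∑ᶠ i ∈ {i : ℤ | i ≤ j}, maskOf α β (3 - 2*i) = B (j-1) := by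
    intro j
    rw [finsum_mem_congr rfl (fun i _ => hmask3 i),
      hinner (fun i => β (i-1)) (-M+1) (fun i hi => hβ0 (i-1) (Or.inl (by omega))) j]
    have hs := sum_shift' (fun i => β (i-1)) (-M) (j-1) 1
    rw [show j-1+1 = j by ring] at hs
    simp only [add_sub_cancel_right] at hs
    exact hs
  -- the two components of γ as finite sums
  have hΓ1 : (∑ᶠ j : ℤ, |(∑ᶠ i ∈ {i : ℤ | i ≤ j}, maskOf α β (2 - 2*i))
          - ∑ᶠ i ∈ {i : ℤ | i ≤ j}, maskOf α β (1 - 2*i)|)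
      = ∑ j ∈ Finset.Icc (-M) (M+1), |A (j-1) - B j| := by
    rw [finsum_congr (fun j => by rw [hsum2 j, hsum1 j])]
    apply finsum_eq_sum_of_support_subset
    intro j hj
    simp only [Function.mem_support] at hj
    simp only [Finset.coe_Icc, Set.mem_Icc]
    by_contra hc
    apply hj
    have heq : A (j-1) = B j := by
      rcases lt_or_ge j (-M) with h | h
      · rw [hAneg _ (by omega), hBneg _ h]
      · have h2 : M + 1 < j := by omega
        rw [hA1 _ (by omega), hB1 _ (by omega)]
    rw [heq, sub_self, abs_zero]
  have hΓ2 : (∑ᶠ j : ℤ, |(∑ᶠ i ∈ {i : ℤ | i ≤ j}, maskOf α β (3 - 2*i))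
          - ∑ᶠ i ∈ {i : ℤ | i ≤ j}, maskOf α β (2 - 2*i)|)
      = ∑ j ∈ Finset.Icc (-M) (M+1), |B (j-1) - A (j-1)| := by
    rw [finsum_congr (fun j => by rw [hsum3 j, hsum2 j])]
    apply finsum_eq_sum_of_support_subset
    intro j hj
    simp only [Function.mem_support] at hj
    simp only [Finset.coe_Icc, Set.mem_Icc]
    by_contra hc
    apply hj
    have heq : B (j-1) = A (j-1) := by
      rcases lt_or_ge j (-M) with h | h
      · rw [hAneg _ (by omega), hBneg _ (by omega)]
      · have h2 : M + 1 < j := by omega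
        rw [hA1 _ (by omega), hB1 _ (by omega)]
    rw [heq, sub_self, abs_zero]
  have hγ1 : ∑ j ∈ Finset.Icc (-M) (M+1), |A (j-1) - B j| ≤ γ := by
    rw [hγdef, ← hΓ1]
    exact le_max_left _ _
  have hγ2 : ∑ j ∈ Finset.Icc (-M) (M+1), |B (j-1) - A (j-1)| ≤ γ := by
    rw [hγdef, ← hΓ2]
    exact le_max_right _ _
  have hδ0 : 0 ≤ δ := le_trans (norm_nonneg _) (hδ 0)
  intro i
  rcases Int.even_or_odd i with ⟨k, hk⟩ | ⟨k, hk⟩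
  · -- even case : i = 2k
    have e1 : S x i = ∑ j ∈ Finset.Icc (-M) (M+1), α j • x (k+j) := by
      rw [show i = 2*k by omega, hSeven]
    have e2 : S x (i+1) = ∑ j ∈ Finset.Icc (-M) (M+1), β j • x (k+j) := by
      rw [show i+1 = 2*k+1 by omega, hSodd]
    rw [e2, e1, ← Finset.sum_sub_distrib,
      Finset.sum_congr rfl (fun j _ => (sub_smul (β j) (α j) (x (k+j))).symm)]
    have hbd := abel_bound (-M) (M+1) (fun j => β j - α j) (fun j => x (k+j)) δ
      (by rw [Finset.sum_sub_distrib, hα1, hβ1]; ring)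
      (fun j => by
        show ‖x (k+(j+1)) - x (k+j)‖ ≤ δ
        rw [show k+(j+1) = (k+j)+1 by ring]; exact hδ _)
    refine le_trans hbd ?_
    refine mul_le_mul_of_nonneg_right ?_ hδ0
    calc ∑ j ∈ Finset.Icc (-M) (M+1-1), |∑ t ∈ Finset.Icc (-M) j, (β t - α t)|
        = ∑ j ∈ Finset.Icc (-M) M, |B j - A j| := by
          rw [show M+1-1 = M by ring]
          exact Finset.sum_congr rfl fun j _ => by rw [Finset.sum_sub_distrib]
      _ ≤ ∑ j ∈ Finset.Icc (-M-1) M, |B j - A j| :=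
          Finset.sum_le_sum_of_subset_of_nonneg
            (Finset.Icc_subset_Icc (by omega) le_rfl) (fun _ _ _ => abs_nonneg _)
      _ = ∑ j ∈ Finset.Icc (-M) (M+1), |B (j-1) - A (j-1)| := by
          have hs := sum_shift' (fun j => |B (j-1) - A (j-1)|) (-M-1) M 1
          rw [show -M-1+1 = -M by ring] at hs
          simp only [add_sub_cancel_right] at hs
          exact hs.symm
      _ ≤ γ := hγ2
  · -- odd case : i = 2k+1
    have e1 : S x i = ∑ j ∈ Finset.Icc (-M) (M+2), β j • x (k+j) := by
      rw [show i = 2*k+1 by omega, hSodd]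
      exact Finset.sum_subset (Finset.Icc_subset_Icc le_rfl (by omega))
        (fun t _ hnt => by
          rw [hβ0 t (by simp only [Finset.mem_Icc] at hnt; omega), zero_smul])
    have e2 : S x (i+1) = ∑ j ∈ Finset.Icc (-M) (M+2), α (j-1) • x (k+j) := by
      rw [show i+1 = 2*(k+1) by omega, hSeven]
      have hs := sum_shift' (fun j => α (j-1) • x (k+j)) (-M) (M+1) 1
      simp only [add_sub_cancel_right] at hs
      have hre : ∑ j ∈ Finset.Icc (-M) (M+1), α j • x (k+1+j)
          = ∑ j ∈ Finset.Icc (-M+1) (M+1+1), α (j-1) • x (k+j) := by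
        rw [hs]
        exact Finset.sum_congr rfl fun j _ => by rw [show k+(j+1) = k+1+j by ring]
      rw [hre, show (M+1+1 : ℤ) = M+2 by ring]
      exact Finset.sum_subset (Finset.Icc_subset_Icc (by omega) le_rfl)
        (fun t ht hnt => by
          rw [hα0 (t-1) (by simp only [Finset.mem_Icc] at ht hnt; omega), zero_smul])
    rw [e2, e1, ← Finset.sum_sub_distrib,
      Finset.sum_congr rfl (fun j _ => (sub_smul (α (j-1)) (β j) (x (k+j))).symm)]
    have hαshift : ∀ j : ℤ, ∑ t ∈ Finset.Icc (-M) j, α (t-1) = A (j-1) := by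
      intro j
      have hs := sum_shift' (fun t => α (t-1)) (-M-1) (j-1) 1
      rw [show -M-1+1 = -M by ring, show j-1+1 = j by ring] at hs
      simp only [add_sub_cancel_right] at hs
      rw [hs]
      exact (Finset.sum_subset (Finset.Icc_subset_Icc (by omega) le_rfl)
        (fun t ht hnt => hα0 t (by simp only [Finset.mem_Icc] at ht hnt; omega))).symm
    have htot : ∑ t ∈ Finset.Icc (-M) (M+2), (α (t-1) - β t) = 0 := by
      rw [Finset.sum_sub_distrib, hαshift (M+2), show (M+2-1 : ℤ) = M+1 by ring,
        hA1 _ le_rfl]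
      have : ∑ t ∈ Finset.Icc (-M) (M+2), β t = 1 := by
        rw [← hβ1]
        exact (Finset.sum_subset (Finset.Icc_subset_Icc le_rfl (by omega))
          (fun t _ hnt => hβsupp t hnt)).symm
      rw [this]; ring
    have hbd := abel_bound (-M) (M+2) (fun j => α (j-1) - β j) (fun j => x (k+j)) δ htot
      (fun j => by
        show ‖x (k+(j+1)) - x (k+j)‖ ≤ δ
        rw [show k+(j+1) = (k+j)+1 by ring]; exact hδ _)
    refine le_trans hbd ?_
    refine mul_le_mul_of_nonneg_right ?_ hδ0
    calc ∑ j ∈ Finset.Icc (-M) (M+2-1), |∑ t ∈ Finset.Icc (-M) j, (α (t-1) - β t)|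
        = ∑ j ∈ Finset.Icc (-M) (M+1), |A (j-1) - B j| := by
          rw [show (M+2-1 : ℤ) = M+1 by ring]
          exact Finset.sum_congr rfl fun j _ => by
            rw [Finset.sum_sub_distrib, hαshift j]
      _ ≤ γ := hγ1
  done
end

section
/- Let (δ_j)_{j=-m}^{m+1} be real numbers with Σ_j δ_j = 0. Write δ_− = Σ_{δ_j<0} |δ_j| and δ_+ = Σ_{δ_j≥0} δ_j, so δ_− = δ_+. Define η¹_j = max(δ_j, 0) and η²_j = max(−δ_j, 0), and the step functions ε_1, ε_2: [0, δ_−] → {−m, …, m+1} by ε_k(t) = 1 + sup{ j : Σ_{i≤j} η^k_i < t }. Then ∫₀^{δ_−} |ε_1(t) − ε_2(t)| dt = Σ_{j=-m}^{m+1} |Σ_{i≤j} δ_i|. -/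
open MeasureTheory

private lemma aux_sup (m : ℕ) (c : ℤ → ℝ) (d t : ℝ) (hmono : Monotone c)
    (h0 : ∀ j : ℤ, j < -(m:ℤ) → c j = 0)
    (htop : ∀ j : ℤ, (m:ℤ) + 1 ≤ j → d ≤ c j)
    (ht0 : 0 < t) (htd : t ≤ d) :
    -(m:ℤ) ≤ 1 + sSup (insert (-(m:ℤ) - 1) {j : ℤ | c j < t}) ∧
      1 + sSup (insert (-(m:ℤ) - 1) {j : ℤ | c j < t}) ≤ (m:ℤ) + 1 ∧
      ∀ j : ℤ, c j < t ↔ j < 1 + sSup (insert (-(m:ℤ) - 1) {j : ℤ | c j < t}) := by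
  set T := insert (-(m:ℤ) - 1) {j : ℤ | c j < t} with hT
  have hne : T.Nonempty := ⟨_, Set.mem_insert _ _⟩
  have hub : ∀ x ∈ T, x ≤ (m:ℤ) := by
    intro x hx
    rcases hx with hx | hx
    · omega
    · simp only [Set.mem_setOf_eq] at hx
      by_contra hxm
      push_neg at hxm
      have := htop x (by omega)
      linarith
  have hbdd : BddAbove T := ⟨(m:ℤ), fun x hx => hub x hx⟩
  have hmem : sSup T ∈ T := Int.csSup_mem hne hbdd
  have hle : ∀ j ∈ T, j ≤ sSup T := fun j hj => le_csSup hbdd hj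
  have h1 : -(m:ℤ) - 1 ≤ sSup T := hle _ (Set.mem_insert _ _)
  have h2 : sSup T ≤ (m:ℤ) := csSup_le hne hub
  refine ⟨by omega, by omega, fun j => ⟨fun hj => ?_, fun hj => ?_⟩⟩
  · have : j ≤ sSup T := hle j (Set.mem_insert_of_mem _ hj)
    omega
  · have hjs : j ≤ sSup T := by omega
    rcases Set.mem_insert_iff.1 hmem with hm | hm
    · have hj' : j < -(m:ℤ) := by omega
      rw [h0 j hj']
      exact ht0
    · simp only [Set.mem_setOf_eq] at hm
      exact lt_of_le_of_lt (hmono hjs) hm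

private lemma aux_count (m : ℕ) (e : ℤ) (c : ℤ → ℝ) (t : ℝ)
    (he1 : -(m:ℤ) ≤ e) (he2 : e ≤ (m:ℤ) + 1)
    (hiff : ∀ j : ℤ, c j < t ↔ j < e) :
    (e : ℝ) = -(m:ℝ) + ∑ j ∈ Finset.Icc (-(m:ℤ)) (m:ℤ), (if c j < t then (1:ℝ) else 0) := by
  classical
  have h1 : ∑ j ∈ Finset.Icc (-(m:ℤ)) (m:ℤ), (if c j < t then (1:ℝ) else 0)
      = (((Finset.Icc (-(m:ℤ)) (m:ℤ)).filter (fun j => c j < t)).card : ℝ) := by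
    rw [Finset.sum_boole]
  have h2 : (Finset.Icc (-(m:ℤ)) (m:ℤ)).filter (fun j => c j < t)
      = Finset.Icc (-(m:ℤ)) (e - 1) := by
    ext j
    simp only [Finset.mem_filter, Finset.mem_Icc, hiff j]
    omega
  have h4 : (((e - 1) + 1 - -(m:ℤ)).toNat : ℤ) = e + m := by
    rw [Int.toNat_of_nonneg (by omega)]
    ring
  have h5 : ((((e - 1) + 1 - -(m:ℤ)).toNat : ℕ) : ℝ) = (e : ℝ) + m := by
    exact_mod_cast congrArg (fun z : ℤ => (z : ℝ)) h4
  rw [h1, h2, Int.card_Icc, h5]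
  ring

private lemma aux_ind (x y t : ℝ) :
    |(if x < t then (1:ℝ) else 0) - (if y < t then (1:ℝ) else 0)|
      = Set.indicator (Set.Ioc (min x y) (max x y)) (fun _ => (1:ℝ)) t := by
  rcases lt_or_ge x t with h1 | h1 <;> rcases lt_or_ge y t with h2 | h2
  · rw [if_pos h1, if_pos h2,
      Set.indicator_of_notMem (fun h => absurd (Set.mem_Ioc.1 h).2 (not_le.2 (max_lt h1 h2)))]
    simp
  · rw [if_pos h1, if_neg (not_lt.2 h2),
      Set.indicator_of_mem (Set.mem_Ioc.2 ⟨lt_of_le_of_lt (min_le_left x y) h1,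
        le_trans h2 (le_max_right x y)⟩)]
    simp
  · rw [if_neg (not_lt.2 h1), if_pos h2,
      Set.indicator_of_mem (Set.mem_Ioc.2 ⟨lt_of_le_of_lt (min_le_right x y) h2,
        le_trans h1 (le_max_left x y)⟩)]
    simp
  · rw [if_neg (not_lt.2 h1), if_neg (not_lt.2 h2),
      Set.indicator_of_notMem (fun h => absurd (Set.mem_Ioc.1 h).1 (not_lt.2 (le_min h1 h2)))]
    simp

private lemma aux_pt (m : ℕ) (c₁ c₂ : ℤ → ℝ) (t : ℝ) (e₁ e₂ : ℤ)
    (h1a : -(m:ℤ) ≤ e₁) (h1b : e₁ ≤ (m:ℤ) + 1) (h1c : ∀ j : ℤ, c₁ j < t ↔ j < e₁)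
    (h2a : -(m:ℤ) ≤ e₂) (h2b : e₂ ≤ (m:ℤ) + 1) (h2c : ∀ j : ℤ, c₂ j < t ↔ j < e₂) :
    |((e₁:ℝ)) - (e₂:ℝ)| = ∑ j ∈ Finset.Icc (-(m:ℤ)) (m:ℤ),
      Set.indicator (Set.Ioc (min (c₁ j) (c₂ j)) (max (c₁ j) (c₂ j))) (fun _ => (1:ℝ)) t := by
  classical
  have e1 := aux_count m e₁ c₁ t h1a h1b h1c
  have e2 := aux_count m e₂ c₂ t h2a h2b h2c
  rw [Finset.sum_congr rfl (fun j _ => (aux_ind (c₁ j) (c₂ j) t).symm)]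
  have hdiff : (e₁:ℝ) - (e₂:ℝ) = ∑ j ∈ Finset.Icc (-(m:ℤ)) (m:ℤ),
      ((if c₁ j < t then (1:ℝ) else 0) - (if c₂ j < t then (1:ℝ) else 0)) := by
    rw [e1, e2, Finset.sum_sub_distrib]
    ring
  rw [hdiff]
  rcases le_total e₂ e₁ with hle | hle
  · have hj : ∀ j ∈ Finset.Icc (-(m:ℤ)) (m:ℤ),
        (0:ℝ) ≤ (if c₁ j < t then (1:ℝ) else 0) - (if c₂ j < t then (1:ℝ) else 0) := by
      intro j _
      by_cases h2 : c₂ j < t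
      · have h1 : c₁ j < t := (h1c j).2 (lt_of_lt_of_le ((h2c j).1 h2) hle)
        simp [h1, h2]
      · simp only [if_neg h2, sub_zero]
        split_ifs <;> norm_num
    rw [abs_of_nonneg (Finset.sum_nonneg hj)]
    exact Finset.sum_congr rfl fun j hjm => (abs_of_nonneg (hj j hjm)).symm
  · have hj : ∀ j ∈ Finset.Icc (-(m:ℤ)) (m:ℤ),
        (if c₁ j < t then (1:ℝ) else 0) - (if c₂ j < t then (1:ℝ) else 0) ≤ 0 := by
      intro j _
      by_cases h1 : c₁ j < t
      · have h2 : c₂ j < t := (h2c j).2 (lt_of_lt_of_le ((h1c j).1 h1) hle)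
        simp [h1, h2]
      · simp only [if_neg h1, zero_sub]
        split_ifs <;> norm_num
    rw [abs_of_nonpos (Finset.sum_nonpos hj), ← Finset.sum_neg_distrib]
    exact Finset.sum_congr rfl fun j hjm => (abs_of_nonpos (hj j hjm)).symm

/-- The combinatorial integral identity used in Lemma 4: with
`δ_j` summing to 0, `η¹_j = max(δ_j,0)`, `η²_j = max(−δ_j,0)` and step functions
`ε_k(t) = 1 + sup {j : ∑_{i≤j} η^k_i < t}` (sup of the empty set being `−m−1`),
one has `∫₀^{δ₋} |ε₁(t) − ε₂(t)| dt = ∑_j |∑_{i≤j} δ_i|`. -/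
theorem stmt_14 (m : ℕ) (δ : ℤ → ℝ)
    (hδ0 : ∀ j, j ∉ Finset.Icc (-(m:ℤ)) ((m:ℤ)+1) → δ j = 0)
    (hδsum : ∑ j ∈ Finset.Icc (-(m:ℤ)) ((m:ℤ)+1), δ j = 0)
    (δminus : ℝ)
    (hδminus : δminus = ∑ j ∈ Finset.Icc (-(m:ℤ)) ((m:ℤ)+1), max (-δ j) 0)
    (ε₁ ε₂ : ℝ → ℤ)
    (hε₁ : ∀ t : ℝ, ε₁ t = 1 + sSup (insert (-(m:ℤ) - 1)
      {j : ℤ | ∑ i ∈ Finset.Icc (-(m:ℤ)) j, max (δ i) 0 < t}))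
    (hε₂ : ∀ t : ℝ, ε₂ t = 1 + sSup (insert (-(m:ℤ) - 1)
      {j : ℤ | ∑ i ∈ Finset.Icc (-(m:ℤ)) j, max (-δ i) 0 < t})) :
    ∫ t in (0:ℝ)..δminus, |((ε₁ t : ℝ)) - ((ε₂ t : ℝ))|
      = ∑ j ∈ Finset.Icc (-(m:ℤ)) ((m:ℤ)+1),
          |∑ i ∈ Finset.Icc (-(m:ℤ)) j, δ i| := by
  classical
  -- basic facts about the partial sum functions
  have hmono1 : Monotone (fun j : ℤ => ∑ i ∈ Finset.Icc (-(m:ℤ)) j, max (δ i) 0) := by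
    intro j k hjk
    exact Finset.sum_le_sum_of_subset_of_nonneg (Finset.Icc_subset_Icc_right hjk)
      (fun i _ _ => le_max_right _ _)
  have hmono2 : Monotone (fun j : ℤ => ∑ i ∈ Finset.Icc (-(m:ℤ)) j, max (-δ i) 0) := by
    intro j k hjk
    exact Finset.sum_le_sum_of_subset_of_nonneg (Finset.Icc_subset_Icc_right hjk)
      (fun i _ _ => le_max_right _ _)
  have h0c : ∀ (f : ℤ → ℝ) (j : ℤ), j < -(m:ℤ) → ∑ i ∈ Finset.Icc (-(m:ℤ)) j, f i = 0 := by
    intro f j hj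
    rw [Finset.Icc_eq_empty (by omega), Finset.sum_empty]
  have hDsum : ∀ j : ℤ, (∑ i ∈ Finset.Icc (-(m:ℤ)) j, max (δ i) 0)
      - (∑ i ∈ Finset.Icc (-(m:ℤ)) j, max (-δ i) 0) = ∑ i ∈ Finset.Icc (-(m:ℤ)) j, δ i := by
    intro j
    rw [← Finset.sum_sub_distrib]
    exact Finset.sum_congr rfl fun i _ => max_zero_sub_max_neg_zero_eq_self (δ i)
  have hatop : (∑ i ∈ Finset.Icc (-(m:ℤ)) ((m:ℤ)+1), max (δ i) 0) = δminus := by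
    have h := hDsum ((m:ℤ)+1)
    rw [hδsum] at h
    rw [hδminus]
    linarith
  have htop1 : ∀ j : ℤ, (m:ℤ) + 1 ≤ j → δminus ≤ ∑ i ∈ Finset.Icc (-(m:ℤ)) j, max (δ i) 0 := by
    intro j hj
    rw [← hatop]
    exact Finset.sum_le_sum_of_subset_of_nonneg (Finset.Icc_subset_Icc_right hj)
      (fun i _ _ => le_max_right _ _)
  have htop2 : ∀ j : ℤ, (m:ℤ) + 1 ≤ j → δminus ≤ ∑ i ∈ Finset.Icc (-(m:ℤ)) j, max (-δ i) 0 := by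
    intro j hj
    rw [hδminus]
    exact Finset.sum_le_sum_of_subset_of_nonneg (Finset.Icc_subset_Icc_right hj)
      (fun i _ _ => le_max_right _ _)
  have hδm0 : 0 ≤ δminus := by
    rw [hδminus]
    exact Finset.sum_nonneg fun i _ => le_max_right _ _
  -- key properties of ε₁, ε₂
  have key₁ : ∀ t : ℝ, 0 < t → t ≤ δminus →
      -(m:ℤ) ≤ ε₁ t ∧ ε₁ t ≤ (m:ℤ) + 1 ∧
      ∀ j : ℤ, (∑ i ∈ Finset.Icc (-(m:ℤ)) j, max (δ i) 0) < t ↔ j < ε₁ t := by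
    intro t ht0 htd
    rw [hε₁ t]
    exact aux_sup m (fun j => ∑ i ∈ Finset.Icc (-(m:ℤ)) j, max (δ i) 0) δminus t
      hmono1 (fun j hj => h0c _ j hj) htop1 ht0 htd
  have key₂ : ∀ t : ℝ, 0 < t → t ≤ δminus →
      -(m:ℤ) ≤ ε₂ t ∧ ε₂ t ≤ (m:ℤ) + 1 ∧
      ∀ j : ℤ, (∑ i ∈ Finset.Icc (-(m:ℤ)) j, max (-δ i) 0) < t ↔ j < ε₂ t := by
    intro t ht0 htd
    rw [hε₂ t]
    exact aux_sup m (fun j => ∑ i ∈ Finset.Icc (-(m:ℤ)) j, max (-δ i) 0) δminus t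
      hmono2 (fun j hj => h0c _ j hj) htop2 ht0 htd
  -- pointwise identity on (0, δminus]
  have hpt : Set.EqOn (fun t => |((ε₁ t : ℝ)) - ((ε₂ t : ℝ))|)
      (fun t => ∑ j ∈ Finset.Icc (-(m:ℤ)) (m:ℤ),
        Set.indicator (Set.Ioc
          (min (∑ i ∈ Finset.Icc (-(m:ℤ)) j, max (δ i) 0)
               (∑ i ∈ Finset.Icc (-(m:ℤ)) j, max (-δ i) 0))
          (max (∑ i ∈ Finset.Icc (-(m:ℤ)) j, max (δ i) 0)
               (∑ i ∈ Finset.Icc (-(m:ℤ)) j, max (-δ i) 0))) (fun _ => (1:ℝ)) t)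
      (Set.Ioc 0 δminus) := by
    intro t ht
    obtain ⟨h1a, h1b, h1c⟩ := key₁ t ht.1 ht.2
    obtain ⟨h2a, h2b, h2c⟩ := key₂ t ht.1 ht.2
    exact aux_pt m (fun j => ∑ i ∈ Finset.Icc (-(m:ℤ)) j, max (δ i) 0)
      (fun j => ∑ i ∈ Finset.Icc (-(m:ℤ)) j, max (-δ i) 0) t (ε₁ t) (ε₂ t)
      h1a h1b h1c h2a h2b h2c
  rw [intervalIntegral.integral_of_le hδm0,
    MeasureTheory.setIntegral_congr_fun measurableSet_Ioc hpt]
  -- integrability of each indicator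
  have hint : ∀ j ∈ Finset.Icc (-(m:ℤ)) (m:ℤ),
      MeasureTheory.Integrable (fun t => Set.indicator (Set.Ioc
          (min (∑ i ∈ Finset.Icc (-(m:ℤ)) j, max (δ i) 0)
               (∑ i ∈ Finset.Icc (-(m:ℤ)) j, max (-δ i) 0))
          (max (∑ i ∈ Finset.Icc (-(m:ℤ)) j, max (δ i) 0)
               (∑ i ∈ Finset.Icc (-(m:ℤ)) j, max (-δ i) 0))) (fun _ => (1:ℝ)) t)
        (MeasureTheory.volume.restrict (Set.Ioc (0:ℝ) δminus)) := by
    intro j _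
    rw [MeasureTheory.integrable_indicator_iff measurableSet_Ioc]
    refine MeasureTheory.integrableOn_const (LT.lt.ne ?_)
    refine lt_of_le_of_lt (MeasureTheory.Measure.restrict_apply_le _ _) ?_
    rw [Real.volume_Ioc]
    exact ENNReal.ofReal_lt_top
  rw [MeasureTheory.integral_finset_sum _ hint]
  -- compute each term
  have hterm : ∀ j ∈ Finset.Icc (-(m:ℤ)) (m:ℤ),
      (∫ t in Set.Ioc (0:ℝ) δminus, Set.indicator (Set.Ioc
          (min (∑ i ∈ Finset.Icc (-(m:ℤ)) j, max (δ i) 0)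
               (∑ i ∈ Finset.Icc (-(m:ℤ)) j, max (-δ i) 0))
          (max (∑ i ∈ Finset.Icc (-(m:ℤ)) j, max (δ i) 0)
               (∑ i ∈ Finset.Icc (-(m:ℤ)) j, max (-δ i) 0))) (fun _ => (1:ℝ)) t)
        = |∑ i ∈ Finset.Icc (-(m:ℤ)) j, δ i| := by
    intro j hj
    rw [Finset.mem_Icc] at hj
    set A := ∑ i ∈ Finset.Icc (-(m:ℤ)) j, max (δ i) 0 with hA
    set B := ∑ i ∈ Finset.Icc (-(m:ℤ)) j, max (-δ i) 0 with hB
    have hA0 : 0 ≤ A := Finset.sum_nonneg fun i _ => le_max_right _ _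
    have hB0 : 0 ≤ B := Finset.sum_nonneg fun i _ => le_max_right _ _
    have hAle : A ≤ δminus := by
      rw [← hatop]
      exact hmono1 (by omega)
    have hBle : B ≤ δminus := by
      rw [hδminus]
      exact hmono2 (by omega)
    have hsub : Set.Ioc (min A B) (max A B) ⊆ Set.Ioc 0 δminus :=
      Set.Ioc_subset_Ioc (le_min hA0 hB0) (max_le hAle hBle)
    rw [MeasureTheory.setIntegral_indicator measurableSet_Ioc,
      Set.inter_eq_self_of_subset_right hsub, MeasureTheory.setIntegral_const,
      Real.volume_real_Ioc_of_le min_le_max, smul_eq_mul, mul_one]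
    have hmaxmin : max A B - min A B = |A - B| := by
      rcases le_total A B with h | h
      · rw [max_eq_right h, min_eq_left h, abs_of_nonpos (sub_nonpos.2 h)]
        ring
      · rw [max_eq_left h, min_eq_right h, abs_of_nonneg (sub_nonneg.2 h)]
    rw [hmaxmin, hDsum j]
  rw [Finset.sum_congr rfl hterm]
  -- extend the sum from Icc(-m, m) to Icc(-m, m+1)
  have hins : Finset.Icc (-(m:ℤ)) ((m:ℤ)+1) = insert ((m:ℤ)+1) (Finset.Icc (-(m:ℤ)) (m:ℤ)) := by
    ext x
    simp only [Finset.mem_Icc, Finset.mem_insert]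
    omega
  rw [hins, Finset.sum_insert (by simp only [Finset.mem_Icc]; omega), hδsum, abs_zero, zero_add]
end
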